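/- arXiv:2409.10853 — 4 statements merged into one kernel-verified Lean document; each statement's English description precedes it below -/
import Mathlib

section
/- (Jiang–Seiver) Let ε and c be positive reals with ε ≤ 1. There exist constants K ≥ 1 and c' > 0 depending only on c and ε, and an integer N depending only on c and ε, such that for every n ≥ N: if G is an n-vertex simple graph with e(G) ≥ c·n^{1+ε}, then G contains a subgraph G' on n' ≥ n^{ε/4} vertices such that Δ(G') ≤ K·δ(G') and e(G') ≥ c'·n'^{1+ε}. -/
/-- Number of edges of a simple graph. -/
noncomputable def edgeCount {V : Type*} (G : SimpleGraph V) : ℕ := Nat.card G.edgeSet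

/-- Average degree `2e(G)/|V(G)|` of a simple graph. -/
noncomputable def avgDeg {V : Type*} (G : SimpleGraph V) : ℝ :=
  2 * (edgeCount G : ℝ) / (Nat.card V : ℝ)

/-- Degree of a vertex. -/
noncomputable def deg {V : Type*} (G : SimpleGraph V) (v : V) : ℕ := Nat.card (G.neighborSet v)

/-- Minimum degree. -/
noncomputable def minDeg {V : Type*} [Fintype V] (G : SimpleGraph V) : ℕ :=
  sInf (Set.range (deg G))

/-- Maximum degree. -/
noncomputable def maxDeg {V : Type*} [Fintype V] (G : SimpleGraph V) : ℕ :=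
  Finset.univ.sup (deg G)

open Classical in
/-- Adjacency matrix over the reals. -/
noncomputable def adjMat {V : Type*} [Fintype V] (G : SimpleGraph V) : Matrix V V ℝ :=
  G.adjMatrix ℝ

/-- Spectral radius: the largest eigenvalue of the adjacency matrix. -/
noncomputable def specRad {V : Type*} [Fintype V] (G : SimpleGraph V) : ℝ :=
  sSup {μ : ℝ | ∃ x : V → ℝ, x ≠ 0 ∧ (adjMat G).mulVec x = μ • x}

/-- `H` is (isomorphic to) a subgraph of `G`, i.e. `H` is obtained from `G` by
deleting vertices and/or edges. -/
def IsSubgraphOf {α β : Type*} (H : SimpleGraph α) (G : SimpleGraph β) : Prop :=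
  ∃ f : α ↪ β, ∀ u v, H.Adj u v → G.Adj (f u) (f v)

/-- `G` contains no member of the family `𝓗` as a subgraph. -/
def HFree {n : ℕ} (𝓗 : Set (Σ m : ℕ, SimpleGraph (Fin m))) (G : SimpleGraph (Fin n)) : Prop :=
  ∀ H ∈ 𝓗, ¬ IsSubgraphOf H.2 G

/-- Turán number: maximum number of edges of an `n`-vertex `𝓗`-free graph. -/
noncomputable def exNum (𝓗 : Set (Σ m : ℕ, SimpleGraph (Fin m))) (n : ℕ) : ℕ :=
  sSup {k : ℕ | ∃ G : SimpleGraph (Fin n), HFree 𝓗 G ∧ edgeCount G = k}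

/-- Spectral Turán number: maximum spectral radius of an `n`-vertex `𝓗`-free graph. -/
noncomputable def spexNum (𝓗 : Set (Σ m : ℕ, SimpleGraph (Fin m))) (n : ℕ) : ℝ :=
  sSup {μ : ℝ | ∃ G : SimpleGraph (Fin n), HFree 𝓗 G ∧ specRad G = μ}

/-! ### Auxiliary machinery for the Erdős–Simonovits regularization argument -/

open Classical in
/-- neighbor finset (classical) -/
noncomputable def nbr {V : Type*} [Fintype V] (G : SimpleGraph V) (v : V) : Finset V :=
  Finset.univ.filter (fun u => G.Adj v u)

lemma mem_nbr {V : Type*} [Fintype V] (G : SimpleGraph V) (v u : V) :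
    u ∈ nbr G v ↔ G.Adj v u := by
  classical
  simp [nbr]

/-- sum of local degrees inside `S` (= twice the number of edges inside `S`). -/
noncomputable def DS {V : Type*} [Fintype V] [DecidableEq V] (G : SimpleGraph V)
    (S : Finset V) : ℕ :=
  ∑ v ∈ S, ((nbr G v) ∩ S).card

section Aux

variable {V : Type*} [Fintype V] [DecidableEq V] (G : SimpleGraph V)

open Classical in
lemma nbr_inter_card (v : V) (A : Finset V) :
    ((nbr G v) ∩ A).card = ∑ u ∈ A, if G.Adj v u then 1 else 0 := by
  have h : (nbr G v) ∩ A = A.filter (fun u => G.Adj v u) := by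
    ext u; simp [mem_nbr, and_comm]
  rw [h, Finset.card_filter]

lemma sum_nbr_comm (A B : Finset V) :
    ∑ v ∈ A, ((nbr G v) ∩ B).card = ∑ u ∈ B, ((nbr G u) ∩ A).card := by
  classical
  simp_rw [nbr_inter_card]
  rw [Finset.sum_comm]
  refine Finset.sum_congr rfl fun u _ => Finset.sum_congr rfl fun v _ => ?_
  congr 1
  simp [G.adj_comm]

lemma nbr_inter_card_mono (v : V) {A B : Finset V} (h : A ⊆ B) :
    ((nbr G v) ∩ A).card ≤ ((nbr G v) ∩ B).card :=
  Finset.card_le_card (Finset.inter_subset_inter (le_refl _) h)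

lemma nbr_inter_card_union (v : V) (A B : Finset V) :
    ((nbr G v) ∩ (A ∪ B)).card ≤ ((nbr G v) ∩ A).card + ((nbr G v) ∩ B).card := by
  rw [Finset.inter_union_distrib_left]
  exact Finset.card_union_le _ _

/-- splitting identity -/
lemma DS_split {B S : Finset V} (hBS : B ⊆ S) :
    DS G S = DS G (S \ B) + (∑ v ∈ B, ((nbr G v) ∩ S).card
      + ∑ v ∈ S \ B, ((nbr G v) ∩ B).card) := by
  have hU : B ∪ (S \ B) = S := Finset.union_sdiff_of_subset hBS
  have hdisj : Disjoint B (S \ B) := Finset.disjoint_sdiff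
  have h1 : DS G S = ∑ v ∈ B, ((nbr G v) ∩ S).card + ∑ v ∈ S \ B, ((nbr G v) ∩ S).card := by
    rw [DS, ← hU, Finset.sum_union hdisj]
    rw [hU]
  have h2 : ∀ v ∈ S \ B, ((nbr G v) ∩ S).card
      = ((nbr G v) ∩ B).card + ((nbr G v) ∩ (S \ B)).card := by
    intro v _
    have he : (nbr G v) ∩ S = ((nbr G v) ∩ B) ∪ ((nbr G v) ∩ (S \ B)) := by
      ext u
      simp only [Finset.mem_inter, Finset.mem_union, Finset.mem_sdiff]
      constructor
      · rintro ⟨h1, h2⟩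
        by_cases hB : u ∈ B
        · exact Or.inl ⟨h1, hB⟩
        · exact Or.inr ⟨h1, h2, hB⟩
      · rintro (⟨h1, h2⟩ | ⟨h1, h2, _⟩)
        · exact ⟨h1, hBS h2⟩
        · exact ⟨h1, h2⟩
    rw [he]
    exact Finset.card_union_of_disjoint (Finset.disjoint_of_subset_left
      (Finset.inter_subset_right) (Finset.disjoint_of_subset_right
      (Finset.inter_subset_right) hdisj))
  rw [h1, Finset.sum_congr rfl h2, Finset.sum_add_distrib]
  unfold DS
  ring

/-- erase identity -/
lemma DS_erase {T : Finset V} {v : V} (hv : v ∈ T) :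
    DS G T = DS G (T.erase v) + 2 * ((nbr G v) ∩ T).card := by
  have hvni : v ∉ T.erase v := Finset.notMem_erase v T
  have hnv : ((nbr G v) ∩ T).card = ((nbr G v) ∩ (T.erase v)).card := by
    congr 1
    ext u
    simp only [Finset.mem_inter, Finset.mem_erase, mem_nbr]
    constructor
    · rintro ⟨h1, h2⟩
      exact ⟨h1, fun huv => (G.irrefl (huv ▸ h1)), h2⟩
    · rintro ⟨h1, _, h2⟩
      exact ⟨h1, h2⟩
  have step : ∀ u ∈ T.erase v, ((nbr G u) ∩ T).card
      = ((nbr G u) ∩ (T.erase v)).card + ((nbr G u) ∩ {v}).card := by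
    intro u hu
    have he : (nbr G u) ∩ T = ((nbr G u) ∩ (T.erase v)) ∪ ((nbr G u) ∩ {v}) := by
      ext w
      simp only [Finset.mem_inter, Finset.mem_union, Finset.mem_erase,
        Finset.mem_singleton]
      constructor
      · rintro ⟨h1, h2⟩
        by_cases hw : w = v
        · exact Or.inr ⟨h1, hw⟩
        · exact Or.inl ⟨h1, hw, h2⟩
      · rintro (⟨h1, _, h2⟩ | ⟨h1, h2⟩)
        · exact ⟨h1, h2⟩
        · exact ⟨h1, h2 ▸ hv⟩
    rw [he]
    refine Finset.card_union_of_disjoint ?_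
    refine Finset.disjoint_of_subset_left Finset.inter_subset_right
      (Finset.disjoint_of_subset_right Finset.inter_subset_right ?_)
    simp [Finset.disjoint_singleton_right, hvni]
  have hsingle : ∑ u ∈ T.erase v, ((nbr G u) ∩ ({v} : Finset V)).card
      = ((nbr G v) ∩ (T.erase v)).card := by
    rw [sum_nbr_comm, Finset.sum_singleton]
  calc DS G T = ((nbr G v) ∩ T).card + ∑ u ∈ T.erase v, ((nbr G u) ∩ T).card := by
        rw [DS, ← Finset.add_sum_erase _ _ hv]
    _ = ((nbr G v) ∩ T).card + (DS G (T.erase v) + ((nbr G v) ∩ (T.erase v)).card) := by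
        rw [Finset.sum_congr rfl step, Finset.sum_add_distrib, hsingle, DS]
    _ = DS G (T.erase v) + 2 * ((nbr G v) ∩ T).card := by
        rw [hnv]; ring

lemma deg_eq_nbr (v : V) : deg G v = (nbr G v).card := by
  classical
  rw [deg, Nat.card_eq_fintype_card, ← Set.toFinset_card]
  congr 1
  ext u
  simp [mem_nbr]

lemma DS_univ : DS G Finset.univ = 2 * edgeCount G := by
  classical
  have h1 : DS G Finset.univ = ∑ v, G.degree v := by
    refine Finset.sum_congr rfl fun v _ => ?_
    rw [Finset.inter_univ, SimpleGraph.degree]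
    congr 1
    ext u
    simp [mem_nbr]
  rw [h1, SimpleGraph.sum_degrees_eq_twice_card_edges]
  congr 1
  rw [edgeCount, Nat.card_eq_fintype_card, ← Set.toFinset_card, SimpleGraph.edgeFinset]

open Real in
lemma chunk_base {B : Finset V} (hb : 1 ≤ B.card) {lam e' : ℝ} (he'0 : 0 ≤ e')
    (hbound : ∀ S : Finset V, S.Nonempty → (DS G S : ℝ) ≤ lam * (S.card : ℝ) ^ (1 + e'))
    {Y : Finset V} (hY : Y.card ≤ B.card) :
    (∑ v ∈ B, ((nbr G v) ∩ (B ∪ Y)).card : ℝ) ≤ lam * (2 * (B.card : ℝ)) ^ (1 + e') := by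
  have h1 : (∑ v ∈ B, ((nbr G v) ∩ (B ∪ Y)).card) ≤ DS G (B ∪ Y) := by
    rw [DS]
    exact Finset.sum_le_sum_of_subset Finset.subset_union_left
  have h2 : (DS G (B ∪ Y) : ℝ) ≤ lam * ((B ∪ Y).card : ℝ) ^ (1 + e') := by
    refine hbound _ ?_
    have : B.Nonempty := Finset.card_pos.mp hb
    exact this.mono Finset.subset_union_left
  have h3 : ((B ∪ Y).card : ℝ) ≤ 2 * B.card := by
    have := Finset.card_union_le B Y
    have h4 : (B ∪ Y).card ≤ 2 * B.card := by omega
    exact_mod_cast h4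
  have hlam : 0 ≤ lam := by
    have := hbound B (Finset.card_pos.mp hb)
    nlinarith [Real.rpow_pos_of_pos (show (0:ℝ) < B.card by exact_mod_cast hb) (1 + e'),
      (DS G B).cast_nonneg (α := ℝ)]
  calc (∑ v ∈ B, ((nbr G v) ∩ (B ∪ Y)).card : ℝ) ≤ (DS G (B ∪ Y) : ℝ) := by exact_mod_cast h1
    _ ≤ lam * ((B ∪ Y).card : ℝ) ^ (1 + e') := h2
    _ ≤ lam * (2 * (B.card : ℝ)) ^ (1 + e') := by
        refine mul_le_mul_of_nonneg_left ?_ hlam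
        exact Real.rpow_le_rpow (Nat.cast_nonneg _) h3 (by linarith)

open Real in
lemma chunk {B : Finset V} (hb : 1 ≤ B.card) {lam e' : ℝ} (he'0 : 0 ≤ e')
    (hbound : ∀ S : Finset V, S.Nonempty → (DS G S : ℝ) ≤ lam * (S.card : ℝ) ^ (1 + e')) :
    ∀ (Y : Finset V), Disjoint B Y →
      (∑ v ∈ B, ((nbr G v) ∩ (B ∪ Y)).card : ℝ)
        ≤ ((Y.card : ℝ) / (B.card : ℝ) + 1) * (lam * (2 * (B.card : ℝ)) ^ (1 + e')) := by
  have hlam2 : 0 ≤ lam * (2 * (B.card : ℝ)) ^ (1 + e') := by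
    have h := chunk_base G hb he'0 hbound (Y := ∅) (by simp)
    have : (0:ℝ) ≤ (∑ v ∈ B, ((nbr G v) ∩ (B ∪ ∅)).card : ℝ) := by positivity
    linarith
  have hbpos : (0:ℝ) < (B.card : ℝ) := by exact_mod_cast hb
  suffices H : ∀ k (Y : Finset V), Y.card = k → Disjoint B Y →
      (∑ v ∈ B, ((nbr G v) ∩ (B ∪ Y)).card : ℝ)
        ≤ ((Y.card : ℝ) / (B.card : ℝ) + 1) * (lam * (2 * (B.card : ℝ)) ^ (1 + e')) by
    intro Y hd; exact H Y.card Y rfl hd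
  intro k
  induction k using Nat.strong_induction_on with
  | _ k ih =>
    intro Y hk hd
    by_cases hYb : Y.card ≤ B.card
    · calc (∑ v ∈ B, ((nbr G v) ∩ (B ∪ Y)).card : ℝ)
          ≤ lam * (2 * (B.card : ℝ)) ^ (1 + e') := chunk_base G hb he'0 hbound hYb
        _ ≤ ((Y.card : ℝ) / (B.card : ℝ) + 1) * (lam * (2 * (B.card : ℝ)) ^ (1 + e')) := by
            nlinarith [div_nonneg (Nat.cast_nonneg (α := ℝ) Y.card) hbpos.le]
    · push_neg at hYb
      obtain ⟨Y₁, hY₁sub, hY₁card⟩ := Finset.exists_subset_card_eq (s := Y) (n := B.card)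
        (le_of_lt hYb)
      set Y₂ := Y \ Y₁ with hY₂def
      have hY₂card : Y₂.card = Y.card - B.card := by
        rw [hY₂def, Finset.card_sdiff_of_subset hY₁sub, hY₁card]
      have hY₂lt : Y₂.card < k := by omega
      have hd₂ : Disjoint B Y₂ := hd.mono_right (Finset.sdiff_subset)
      have ihY₂ := ih Y₂.card hY₂lt Y₂ rfl hd₂
      have hsplit : ∀ v ∈ B, ((nbr G v) ∩ (B ∪ Y)).card
          ≤ ((nbr G v) ∩ (B ∪ Y₁)).card + ((nbr G v) ∩ (B ∪ Y₂)).card := by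
        intro v _
        have hsub : B ∪ Y ⊆ (B ∪ Y₁) ∪ (B ∪ Y₂) := by
          intro u hu
          rcases Finset.mem_union.mp hu with h | h
          · exact Finset.mem_union.mpr (Or.inl (Finset.mem_union.mpr (Or.inl h)))
          · by_cases h1 : u ∈ Y₁
            · exact Finset.mem_union.mpr (Or.inl (Finset.mem_union.mpr (Or.inr h1)))
            · exact Finset.mem_union.mpr (Or.inr (Finset.mem_union.mpr (Or.inr
                (Finset.mem_sdiff.mpr ⟨h, h1⟩))))
        calc ((nbr G v) ∩ (B ∪ Y)).card ≤ ((nbr G v) ∩ ((B ∪ Y₁) ∪ (B ∪ Y₂))).card :=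
              nbr_inter_card_mono G v hsub
          _ ≤ ((nbr G v) ∩ (B ∪ Y₁)).card + ((nbr G v) ∩ (B ∪ Y₂)).card :=
              nbr_inter_card_union G v _ _
      have hsum : (∑ v ∈ B, ((nbr G v) ∩ (B ∪ Y)).card : ℝ)
          ≤ (∑ v ∈ B, ((nbr G v) ∩ (B ∪ Y₁)).card : ℝ)
            + (∑ v ∈ B, ((nbr G v) ∩ (B ∪ Y₂)).card : ℝ) := by
        have := Finset.sum_le_sum hsplit
        rw [Finset.sum_add_distrib] at this
        exact_mod_cast this
      have hbase : (∑ v ∈ B, ((nbr G v) ∩ (B ∪ Y₁)).card : ℝ)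
          ≤ lam * (2 * (B.card : ℝ)) ^ (1 + e') :=
        chunk_base G hb he'0 hbound (le_of_eq hY₁card)
      have hcast : ((Y₂.card : ℝ)) = (Y.card : ℝ) - (B.card : ℝ) := by
        rw [hY₂card]
        have : B.card ≤ Y.card := le_of_lt hYb
        push_cast [this]
        ring
      calc (∑ v ∈ B, ((nbr G v) ∩ (B ∪ Y)).card : ℝ)
          ≤ lam * (2 * (B.card : ℝ)) ^ (1 + e')
            + ((Y₂.card : ℝ) / (B.card : ℝ) + 1) * (lam * (2 * (B.card : ℝ)) ^ (1 + e')) := by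
            linarith
        _ = ((Y.card : ℝ) / (B.card : ℝ) + 1) * (lam * (2 * (B.card : ℝ)) ^ (1 + e')) := by
            rw [hcast]
            field_simp
            ring

end Aux

set_option maxHeartbeats 3200000 in
/-- Jiang–Seiver: a graph with `e(G) ≥ c n^{1+ε}` contains a
`K`-almost regular subgraph `G'` on `n' ≥ n^{ε/4}` vertices with `e(G') ≥ c' n'^{1+ε}`. -/
theorem stmt1 (ε c : ℝ) (hε0 : 0 < ε) (hε1 : ε ≤ 1) (hc : 0 < c) :
    ∃ (K c' : ℝ) (N : ℕ), 1 ≤ K ∧ 0 < c' ∧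
      ∀ n : ℕ, N ≤ n → ∀ G : SimpleGraph (Fin n),
        c * (n : ℝ) ^ (1 + ε) ≤ (edgeCount G : ℝ) →
        ∃ (n' : ℕ) (G' : SimpleGraph (Fin n')), IsSubgraphOf G' G ∧
          (n : ℝ) ^ (ε / 4) ≤ (n' : ℝ) ∧
          (maxDeg G' : ℝ) ≤ K * (minDeg G' : ℝ) ∧
          c' * (n' : ℝ) ^ (1 + ε) ≤ (edgeCount G' : ℝ) := by
  classical
  set ε' : ℝ := ε / 2 with hε'def
  have hε'0 : 0 < ε' := by positivity
  have hε'le : ε' ≤ 1 / 2 := by rw [hε'def]; linarith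
  set K0 : ℝ := (32 : ℝ) ^ ((1 : ℝ) / ε') with hK0def
  have hK01 : 1 ≤ K0 := Real.one_le_rpow (by norm_num) (by positivity)
  have hK0pos : 0 < K0 := lt_of_lt_of_le one_pos hK01
  have hK0eps : K0 ^ ε' = 32 := by
    rw [hK0def, ← Real.rpow_mul (by norm_num : (0:ℝ) ≤ 32),
      one_div_mul_cancel (ne_of_gt hε'0), Real.rpow_one]
  set A : ℝ := max 1 (4 / c) with hAdef
  have hA1 : 1 ≤ A := le_max_left _ _
  refine ⟨8 * K0, c / 2, ⌈A ^ ((4 : ℝ) / ε)⌉₊, by linarith, by positivity, ?_⟩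
  intro n hn G hG
  -- basic facts about n
  have hNn : A ^ ((4:ℝ)/ε) ≤ (n : ℝ) := by
    have := Nat.ceil_le.mp hn
    exact_mod_cast this
  have hApow : (1:ℝ) ≤ A ^ ((4:ℝ)/ε) := Real.one_le_rpow hA1 (by positivity)
  have hnR1 : (1:ℝ) ≤ (n:ℝ) := le_trans hApow hNn
  have hnpos : (0:ℝ) < (n:ℝ) := lt_of_lt_of_le one_pos hnR1
  have hn1 : 1 ≤ n := by exact_mod_cast hnR1
  have hn4A : A ≤ (n:ℝ) ^ (ε/4) := by
    have h1 : (A ^ ((4:ℝ)/ε)) ^ (ε/4) ≤ (n:ℝ) ^ (ε/4) :=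
      Real.rpow_le_rpow (by positivity) hNn (by positivity)
    have h2 : (A ^ ((4:ℝ)/ε)) ^ (ε/4) = A := by
      rw [← Real.rpow_mul (by linarith : (0:ℝ) ≤ A)]
      rw [show (4:ℝ)/ε * (ε/4) = 1 by field_simp, Real.rpow_one]
    linarith
  have hn4c : 4 / c ≤ (n:ℝ) ^ (ε/4) := le_trans (le_max_right _ _) hn4A
  have hn41 : (1:ℝ) ≤ (n:ℝ) ^ (ε/4) := le_trans hA1 hn4A
  -- the density-maximizing subset S₀
  have hFinNe : Nonempty (Fin n) := ⟨⟨0, by omega⟩⟩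
  set F : Finset (Fin n) → ℝ := fun S => (DS G S : ℝ) / (S.card : ℝ) ^ (1 + ε') with hFdef
  set 𝒞 : Finset (Finset (Fin n)) :=
    Finset.univ.powerset.filter (fun S => S.Nonempty) with h𝒞def
  have hup : Finset.univ ∈ 𝒞 := by
    rw [h𝒞def, Finset.mem_filter]
    exact ⟨Finset.mem_powerset_self _, Finset.univ_nonempty⟩
  obtain ⟨S₀, hS₀mem, hmax⟩ := Finset.exists_max_image 𝒞 F ⟨Finset.univ, hup⟩
  have hS₀ne : S₀.Nonempty := (Finset.mem_filter.mp hS₀mem).2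
  set m : ℕ := S₀.card with hmdef
  have hm1 : 1 ≤ m := Finset.card_pos.mpr hS₀ne
  have hmR1 : (1:ℝ) ≤ (m:ℝ) := by exact_mod_cast hm1
  have hmpos : (0:ℝ) < (m:ℝ) := lt_of_lt_of_le one_pos hmR1
  set lam : ℝ := F S₀ with hlamdef
  have hbound : ∀ S : Finset (Fin n), S.Nonempty → (DS G S : ℝ) ≤ lam * (S.card : ℝ) ^ (1 + ε') := by
    intro S hS
    have hSmem : S ∈ 𝒞 := by
      rw [h𝒞def, Finset.mem_filter]
      exact ⟨Finset.mem_powerset.mpr (Finset.subset_univ S), hS⟩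
    have h := hmax S hSmem
    have hpow : (0:ℝ) < (S.card : ℝ) ^ (1 + ε') := by
      have : (0:ℝ) < (S.card : ℝ) := by exact_mod_cast Finset.card_pos.mpr hS
      positivity
    rw [hFdef] at h
    calc (DS G S : ℝ) = (DS G S : ℝ) / (S.card : ℝ) ^ (1 + ε') * (S.card : ℝ) ^ (1 + ε') := by
          field_simp
      _ ≤ lam * (S.card : ℝ) ^ (1 + ε') := mul_le_mul_of_nonneg_right h hpow.le
  have hmpow : (0:ℝ) < (m:ℝ) ^ (1 + ε') := by positivity
  have hD0eq : (DS G S₀ : ℝ) = lam * (m:ℝ) ^ (1 + ε') := by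
    rw [hlamdef, hFdef]
    field_simp
    rfl
  -- lower bound on lam
  have hcarduniv : ((Finset.univ : Finset (Fin n)).card : ℝ) = (n : ℝ) := by
    rw [Finset.card_univ, Fintype.card_fin]
  have hlamlow : 2 * c * (n:ℝ) ^ ε' ≤ lam := by
    have h1 : F Finset.univ ≤ lam := hmax _ hup
    have h2 : (DS G Finset.univ : ℝ) = 2 * (edgeCount G : ℝ) := by
      rw [DS_univ]; push_cast; ring
    have hnpow : (0:ℝ) < (n:ℝ) ^ (1 + ε') := by positivity
    rw [hFdef] at h1
    simp only [hcarduniv] at h1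
    rw [h2] at h1
    have h3 : 2 * c * (n:ℝ) ^ ε' ≤ 2 * (edgeCount G : ℝ) / (n:ℝ) ^ (1 + ε') := by
      rw [le_div_iff₀ hnpow]
      have h4 : (n:ℝ) ^ ε' * (n:ℝ) ^ (1 + ε') = (n:ℝ) ^ (1 + ε) := by
        rw [← Real.rpow_add hnpos]
        congr 1
        rw [hε'def]; ring
      calc 2 * c * (n:ℝ) ^ ε' * (n:ℝ) ^ (1 + ε') = 2 * (c * (n:ℝ) ^ (1 + ε)) := by
            rw [mul_assoc (2*c), h4]; ring
        _ ≤ 2 * (edgeCount G : ℝ) := by linarith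
    linarith
  have hlampos : 0 < lam := by
    have : (0:ℝ) < 2 * c * (n:ℝ) ^ ε' := by positivity
    linarith
  have hD0pos : (0:ℝ) < (DS G S₀ : ℝ) := by
    rw [hD0eq]; exact mul_pos hlampos hmpow
  -- average degree and thresholds
  set d : ℝ := (DS G S₀ : ℝ) / (m:ℝ) with hddef
  have hdpos : 0 < d := div_pos hD0pos hmpos
  set θ : ℝ := d / 8 with hθdef
  have hθpos : 0 < θ := div_pos hdpos (by norm_num)
  have hdm : d * (m:ℝ) = (DS G S₀ : ℝ) := by
    rw [hddef]; field_simp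
  -- high-degree vertices
  set B : Finset (Fin n) := S₀.filter (fun v => K0 * d ≤ (((nbr G v) ∩ S₀).card : ℝ))
    with hBdef
  have hBsub : B ⊆ S₀ := Finset.filter_subset _ _
  set b : ℕ := B.card with hbdef
  have hbm' : b ≤ m := Finset.card_le_card hBsub
  have hSB_le_D0 : (∑ v ∈ B, (((nbr G v) ∩ S₀).card : ℝ)) ≤ (DS G S₀ : ℝ) := by
    have h : (∑ v ∈ B, ((nbr G v) ∩ S₀).card) ≤ DS G S₀ :=
      Finset.sum_le_sum_of_subset hBsub
    push_cast
    exact_mod_cast h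
  have hbK : (b:ℝ) * (K0 * d) ≤ (DS G S₀ : ℝ) := by
    have h1 : ∀ v ∈ B, K0 * d ≤ (((nbr G v) ∩ S₀).card : ℝ) := by
      intro v hv
      exact (Finset.mem_filter.mp hv).2
    have h2 : (b:ℝ) * (K0 * d) = ∑ _v ∈ B, K0 * d := by
      rw [Finset.sum_const, nsmul_eq_mul]
    rw [h2]
    calc (∑ _v ∈ B, K0 * d) ≤ ∑ v ∈ B, (((nbr G v) ∩ S₀).card : ℝ) :=
          Finset.sum_le_sum h1
      _ ≤ (DS G S₀ : ℝ) := by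
          exact hSB_le_D0
  have hbmK : (b:ℝ) ≤ (m:ℝ) / K0 := by
    rw [le_div_iff₀ hK0pos]
    have h5 : ((b:ℝ) * K0) * d ≤ (m:ℝ) * d := by
      calc ((b:ℝ) * K0) * d = (b:ℝ) * (K0 * d) := by ring
        _ ≤ (DS G S₀ : ℝ) := hbK
        _ = d * (m:ℝ) := hdm.symm
        _ = (m:ℝ) * d := by ring
    exact le_of_mul_le_mul_right h5 hdpos
  -- the key bound on the degree sum over B
  have hSB : (∑ v ∈ B, ((nbr G v) ∩ S₀).card : ℝ) ≤ (DS G S₀ : ℝ) / 8 := by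
    by_cases hb0 : b = 0
    · have : B = ∅ := Finset.card_eq_zero.mp hb0
      rw [this]
      simp only [Finset.sum_empty, Nat.cast_zero]
      positivity
    · have hb1 : 1 ≤ b := Nat.one_le_iff_ne_zero.mpr hb0
      have hbpos : (0:ℝ) < (b:ℝ) := by exact_mod_cast hb1
      have hY : Disjoint B (S₀ \ B) := Finset.disjoint_sdiff
      have hU : B ∪ (S₀ \ B) = S₀ := Finset.union_sdiff_of_subset hBsub
      have hch := chunk G hb1 hε'0.le hbound (S₀ \ B) hY
      rw [hU] at hch
      have hYcard : (((S₀ \ B).card : ℕ) : ℝ) = (m:ℝ) - (b:ℝ) := by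
        rw [Finset.card_sdiff_of_subset hBsub]
        exact Nat.cast_sub hbm'
      rw [hYcard] at hch
      have hfrac : ((m:ℝ) - (b:ℝ)) / (b:ℝ) + 1 = (m:ℝ) / (b:ℝ) := by
        have hbne : (b:ℝ) ≠ 0 := ne_of_gt hbpos
        rw [eq_div_iff hbne, add_mul, div_mul_cancel₀ _ hbne, one_mul, sub_add_cancel]
      rw [hfrac] at hch
      -- now estimate the right side
      have h2b : (0:ℝ) < 2 * (b:ℝ) := by linarith
      have hsplitpow : (2 * (b:ℝ)) ^ (1 + ε') = 2 ^ (1 + ε') * ((b:ℝ) * (b:ℝ) ^ ε') := by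
        rw [Real.mul_rpow (by norm_num) hbpos.le]
        congr 1
        rw [Real.rpow_add hbpos, Real.rpow_one]
      have h2pow : (2:ℝ) ^ (1 + ε') ≤ 4 := by
        have h1 : (2:ℝ) ^ (1 + ε') ≤ (2:ℝ) ^ (2:ℝ) :=
          Real.rpow_le_rpow_of_exponent_le (by norm_num) (by linarith)
        have h2 : (2:ℝ) ^ (2:ℝ) = 4 := by
          rw [show (2:ℝ) = ((2:ℕ):ℝ) by norm_num, Real.rpow_natCast]
          norm_num
        linarith
      have hbpow : (b:ℝ) ^ ε' ≤ (m:ℝ) ^ ε' / 32 := by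
        have h1 : (b:ℝ) ^ ε' ≤ ((m:ℝ) / K0) ^ ε' :=
          Real.rpow_le_rpow hbpos.le hbmK hε'0.le
        have h2 : ((m:ℝ) / K0) ^ ε' = (m:ℝ) ^ ε' / K0 ^ ε' :=
          Real.div_rpow hmpos.le hK0pos.le ε'
        rw [h2, hK0eps] at h1
        exact h1
      have hmm : (m:ℝ) * ((m:ℝ) ^ ε' / 32) = (m:ℝ) ^ (1 + ε') / 32 := by
        rw [Real.rpow_add hmpos, Real.rpow_one]
        ring
      have hchain : (m:ℝ) / (b:ℝ) * (lam * (2 * (b:ℝ)) ^ (1 + ε'))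
          ≤ (DS G S₀ : ℝ) / 8 := by
        rw [hsplitpow]
        have hbposne : (b:ℝ) ≠ 0 := ne_of_gt hbpos
        have heq : (m:ℝ) / (b:ℝ) * (lam * (2 ^ (1 + ε') * ((b:ℝ) * (b:ℝ) ^ ε')))
            = lam * 2 ^ (1 + ε') * ((m:ℝ) * (b:ℝ) ^ ε') := by
          field_simp
        rw [heq]
        have h4 : lam * 2 ^ (1 + ε') * ((m:ℝ) * (b:ℝ) ^ ε')
            ≤ lam * 4 * ((m:ℝ) * ((m:ℝ) ^ ε' / 32)) := by
          have hmb : (0:ℝ) ≤ (m:ℝ) * (b:ℝ) ^ ε' := mul_nonneg hmpos.le (Real.rpow_nonneg hbpos.le _)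
          have t1 : lam * 2 ^ (1 + ε') * ((m:ℝ) * (b:ℝ) ^ ε')
              ≤ lam * 4 * ((m:ℝ) * (b:ℝ) ^ ε') := by
            apply mul_le_mul_of_nonneg_right _ hmb
            exact mul_le_mul_of_nonneg_left h2pow hlampos.le
          have t2 : lam * 4 * ((m:ℝ) * (b:ℝ) ^ ε')
              ≤ lam * 4 * ((m:ℝ) * ((m:ℝ) ^ ε' / 32)) := by
            apply mul_le_mul_of_nonneg_left _ (by linarith)
            apply mul_le_mul_of_nonneg_left hbpow hmpos.le
          exact le_trans t1 t2
        rw [hmm] at h4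
        calc lam * 2 ^ (1 + ε') * ((m:ℝ) * (b:ℝ) ^ ε')
            ≤ lam * 4 * ((m:ℝ) ^ (1 + ε') / 32) := h4
          _ = lam * (m:ℝ) ^ (1 + ε') / 8 := by ring
          _ = (DS G S₀ : ℝ) / 8 := by rw [hD0eq]
      exact le_trans hch hchain
  -- remove high degree vertices
  set S₁ : Finset (Fin n) := S₀ \ B with hS₁def
  have hS₁sub : S₁ ⊆ S₀ := Finset.sdiff_subset
  have hD1 : (3/4) * (DS G S₀ : ℝ) ≤ (DS G S₁ : ℝ) := by
    have hsp := DS_split G hBsub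
    have hswap : ∑ v ∈ S₀ \ B, ((nbr G v) ∩ B).card = ∑ v ∈ B, ((nbr G v) ∩ (S₀ \ B)).card :=
      sum_nbr_comm G _ _
    have hmono : (∑ v ∈ B, (((nbr G v) ∩ (S₀ \ B)).card : ℝ))
        ≤ ∑ v ∈ B, (((nbr G v) ∩ S₀).card : ℝ) := by
      apply Finset.sum_le_sum
      intro v _
      exact_mod_cast nbr_inter_card_mono G v Finset.sdiff_subset
    have hspR : (DS G S₀ : ℝ) = (DS G S₁ : ℝ)
        + ((∑ v ∈ B, (((nbr G v) ∩ S₀).card : ℝ))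
          + ∑ v ∈ B, (((nbr G v) ∩ (S₀ \ B)).card : ℝ)) := by
      rw [hS₁def]
      rw [hsp]
      push_cast [hswap]
      ring
    have h1 : (∑ v ∈ B, (((nbr G v) ∩ (S₀ \ B)).card : ℝ)) ≤ (DS G S₀ : ℝ) / 8 :=
      le_trans hmono hSB
    linarith [hSB]
  have hdegS₁ : ∀ v ∈ S₁, (((nbr G v) ∩ S₀).card : ℝ) < K0 * d := by
    intro v hv
    rw [hS₁def, Finset.mem_sdiff] at hv
    by_contra hcon
    push_neg at hcon
    exact hv.2 (Finset.mem_filter.mpr ⟨hv.1, hcon⟩)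
  -- trim low degree vertices
  set g : Finset (Fin n) → ℝ := fun T => (DS G T : ℝ) - 2 * θ * T.card with hgdef
  obtain ⟨S₂, hS₂mem, hgmax⟩ := Finset.exists_max_image S₁.powerset g
    ⟨∅, Finset.empty_mem_powerset _⟩
  have hS₂sub : S₂ ⊆ S₁ := Finset.mem_powerset.mp hS₂mem
  have hS₂S₀ : S₂ ⊆ S₀ := hS₂sub.trans hS₁sub
  have hming : ∀ v ∈ S₂, θ ≤ (((nbr G v) ∩ S₂).card : ℝ) := by
    intro v hv
    by_contra hcon
    push_neg at hcon
    have hT : S₂.erase v ∈ S₁.powerset :=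
      Finset.mem_powerset.mpr ((Finset.erase_subset _ _).trans hS₂sub)
    have hcard : ((S₂.erase v).card : ℝ) = (S₂.card : ℝ) - 1 := by
      rw [Finset.card_erase_of_mem hv]
      have h1 : 1 ≤ S₂.card := Finset.card_pos.mpr ⟨v, hv⟩
      push_cast [h1]
      ring
    have her := DS_erase G hv
    have herR : (DS G (S₂.erase v) : ℝ)
        = (DS G S₂ : ℝ) - 2 * (((nbr G v) ∩ S₂).card : ℝ) := by
      rw [her]; push_cast; ring
    have hgT : g (S₂.erase v) = g S₂ + 2 * θ - 2 * (((nbr G v) ∩ S₂).card : ℝ) := by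
      rw [hgdef]
      simp only
      rw [herR, hcard]
      ring
    have := hgmax _ hT
    rw [hgT] at this
    linarith
  have hgS₁ : (DS G S₀ : ℝ) / 2 ≤ g S₁ := by
    have hcard : (S₁.card : ℝ) ≤ (m : ℝ) := by
      exact_mod_cast Finset.card_le_card hS₁sub
    have hθm : 2 * θ * (m:ℝ) = (DS G S₀ : ℝ) / 4 := by
      rw [hθdef, hddef]
      field_simp
      ring
    have h1 : 2 * θ * (S₁.card : ℝ) ≤ (DS G S₀ : ℝ) / 4 := by
      rw [← hθm]
      apply mul_le_mul_of_nonneg_left hcard (by linarith)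
    rw [hgdef]
    simp only
    linarith
  have hDS₂ : (DS G S₀ : ℝ) / 2 ≤ (DS G S₂ : ℝ) := by
    have h1 : g S₁ ≤ g S₂ := hgmax _ (Finset.mem_powerset_self _)
    have h2 : g S₂ ≤ (DS G S₂ : ℝ) := by
      rw [hgdef]
      simp only
      have : (0:ℝ) ≤ 2 * θ * (S₂.card : ℝ) := mul_nonneg (by linarith) (Nat.cast_nonneg _)
      linarith
    exact le_trans (le_trans hgS₁ h1) h2
  have hS₂ne : S₂.Nonempty := by
    rw [Finset.nonempty_iff_ne_empty]
    intro hcon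
    rw [hcon] at hDS₂
    have : DS G (∅ : Finset (Fin n)) = 0 := by simp [DS]
    rw [this] at hDS₂
    simp only [Nat.cast_zero] at hDS₂
    linarith
  -- build the subgraph G'
  have hn'pos : 0 < S₂.card := Finset.card_pos.mpr hS₂ne
  set e2 : ↥S₂ ≃ Fin S₂.card := S₂.equivFin with he2def
  set φ : Fin S₂.card → Fin n := fun i => ((e2.symm i : ↥S₂) : Fin n) with hφdef
  have hφinj : Function.Injective φ := by
    intro i j h
    have h2 : e2.symm i = e2.symm j := Subtype.coe_injective h
    exact e2.symm.injective h2
  have hφmem : ∀ i, φ i ∈ S₂ := fun i => (e2.symm i).2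
  have hφsurj : ∀ v ∈ S₂, ∃ i, φ i = v := by
    intro v hv
    refine ⟨e2 ⟨v, hv⟩, ?_⟩
    rw [hφdef]
    simp
  set G' : SimpleGraph (Fin S₂.card) := SimpleGraph.comap φ G with hG'def
  have hG'adj : ∀ i j, G'.Adj i j ↔ G.Adj (φ i) (φ j) := fun i j => Iff.rfl
  have hdeg : ∀ i, deg G' i = ((nbr G (φ i)) ∩ S₂).card := by
    intro i
    rw [deg_eq_nbr]
    refine Finset.card_bij (fun j _ => φ j) ?_ ?_ ?_
    · intro j hj
      rw [mem_nbr] at hj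
      exact Finset.mem_inter.mpr ⟨(mem_nbr G (φ i) (φ j)).mpr hj, hφmem j⟩
    · intro j₁ _ j₂ _ h
      exact hφinj h
    · intro u hu
      obtain ⟨hu1, hu2⟩ := Finset.mem_inter.mp hu
      obtain ⟨j, hj⟩ := hφsurj u hu2
      refine ⟨j, ?_, hj⟩
      rw [mem_nbr]
      rw [hG'adj]
      rw [hj]
      exact (mem_nbr G (φ i) u).mp hu1
  have hDSG' : DS G' Finset.univ = DS G S₂ := by
    rw [DS, DS]
    refine Finset.sum_bij (fun i _ => φ i) (fun i _ => hφmem i) (fun i _ j _ h => hφinj h)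
      (fun v hv => by
        obtain ⟨i, hi⟩ := hφsurj v hv
        exact ⟨i, Finset.mem_univ i, hi⟩) ?_
    intro i _
    rw [← hdeg i, deg_eq_nbr, Finset.inter_univ]
  have hedge : (DS G S₂ : ℝ) = 2 * (edgeCount G' : ℝ) := by
    rw [← hDSG', DS_univ]
    push_cast
    ring
  refine ⟨S₂.card, G', ⟨⟨φ, hφinj⟩, fun u v h => h⟩, ?_, ?_, ?_⟩
  · -- size lower bound
    have hθm' : θ = lam * (m:ℝ) ^ ε' / 8 := by
      rw [hθdef, hddef, hD0eq]
      rw [Real.rpow_add hmpos, Real.rpow_one]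
      field_simp
    have hmpow1 : (1:ℝ) ≤ (m:ℝ) ^ ε' := Real.one_le_rpow hmR1 hε'0.le
    have hθ2 : c / 4 * (n:ℝ) ^ ε' ≤ θ := by
      rw [hθm']
      calc c / 4 * (n:ℝ) ^ ε' = (2 * c * (n:ℝ) ^ ε') / 8 := by ring
        _ ≤ lam / 8 := by linarith
        _ ≤ lam * (m:ℝ) ^ ε' / 8 := by
            have := mul_le_mul_of_nonneg_left hmpow1 hlampos.le
            rw [mul_one] at this
            linarith
    have hsplit : (n:ℝ) ^ ε' = (n:ℝ) ^ (ε/4) * (n:ℝ) ^ (ε/4) := by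
      rw [← Real.rpow_add hnpos]
      congr 1
      rw [hε'def]
      ring
    have h14 : (1:ℝ) ≤ c / 4 * (n:ℝ) ^ (ε/4) := by
      have h := mul_le_mul_of_nonneg_left hn4c (show (0:ℝ) ≤ c / 4 by positivity)
      have h2 : c / 4 * (4 / c) = 1 := by field_simp
      linarith
    have hθ3 : (n:ℝ) ^ (ε/4) ≤ θ := by
      have hp : (0:ℝ) < (n:ℝ) ^ (ε/4) := by positivity
      calc (n:ℝ) ^ (ε/4) = 1 * (n:ℝ) ^ (ε/4) := by ring
        _ ≤ (c / 4 * (n:ℝ) ^ (ε/4)) * (n:ℝ) ^ (ε/4) :=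
            mul_le_mul_of_nonneg_right h14 hp.le
        _ = c / 4 * (n:ℝ) ^ ε' := by rw [hsplit]; ring
        _ ≤ θ := hθ2
    obtain ⟨v, hv⟩ := hS₂ne
    have hθ4 : θ ≤ (S₂.card : ℝ) := by
      have h1 := hming v hv
      have h2 : ((nbr G v ∩ S₂).card : ℝ) ≤ (S₂.card : ℝ) := by
        exact_mod_cast Finset.card_le_card (Finset.inter_subset_right)
      linarith
    exact le_trans hθ3 hθ4
  · -- almost-regularity
    have hNE : Nonempty (Fin S₂.card) := ⟨⟨0, hn'pos⟩⟩
    have hmind : θ ≤ (minDeg G' : ℝ) := by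
      have hmem := Nat.sInf_mem (Set.range_nonempty (deg G'))
      obtain ⟨i, hi⟩ := hmem
      rw [minDeg, ← hi, hdeg i]
      exact hming (φ i) (hφmem i)
    have hmaxd : (maxDeg G' : ℝ) ≤ K0 * d := by
      obtain ⟨i, _, hi⟩ := Finset.exists_mem_eq_sup Finset.univ Finset.univ_nonempty (deg G')
      rw [maxDeg, hi, hdeg i]
      have h1 : ((nbr G (φ i) ∩ S₂).card : ℝ) ≤ ((nbr G (φ i) ∩ S₀).card : ℝ) := by
        exact_mod_cast nbr_inter_card_mono G (φ i) hS₂S₀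
      have h2 := hdegS₁ (φ i) (hS₂sub (hφmem i))
      linarith
    have hKd : K0 * d = 8 * K0 * θ := by
      rw [hθdef]
      ring
    calc (maxDeg G' : ℝ) ≤ K0 * d := hmaxd
      _ = 8 * K0 * θ := hKd
      _ ≤ 8 * K0 * (minDeg G' : ℝ) := by
          apply mul_le_mul_of_nonneg_left hmind (by positivity)
  · -- edge count lower bound
    have hedgeR : (edgeCount G' : ℝ) = (DS G S₂ : ℝ) / 2 := by
      rw [hedge]
      ring
    have hn'm : ((S₂.card : ℕ) : ℝ) ≤ (m:ℝ) := by
      exact_mod_cast Finset.card_le_card hS₂S₀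
    have hn'n : ((S₂.card : ℕ) : ℝ) ≤ (n:ℝ) := by
      have h := Finset.card_le_card (Finset.subset_univ S₂)
      rw [Finset.card_univ, Fintype.card_fin] at h
      exact_mod_cast h
    have hn'posR : (0:ℝ) < ((S₂.card : ℕ) : ℝ) := by exact_mod_cast hn'pos
    have hsplit' : ((S₂.card : ℕ) : ℝ) ^ (1 + ε)
        = ((S₂.card : ℕ) : ℝ) ^ ε' * ((S₂.card : ℕ) : ℝ) ^ (1 + ε') := by
      rw [← Real.rpow_add hn'posR]
      congr 1
      rw [hε'def]
      ring
    have hp1 : (0:ℝ) < ((S₂.card : ℕ) : ℝ) ^ (1 + ε') := Real.rpow_pos_of_pos hn'posR _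
    have hr1 : ((S₂.card : ℕ) : ℝ) ^ ε' ≤ (n:ℝ) ^ ε' :=
      Real.rpow_le_rpow hn'posR.le hn'n hε'0.le
    have hr2 : ((S₂.card : ℕ) : ℝ) ^ (1 + ε') ≤ (m:ℝ) ^ (1 + ε') :=
      Real.rpow_le_rpow hn'posR.le hn'm (by linarith)
    calc c / 2 * ((S₂.card : ℕ) : ℝ) ^ (1 + ε)
        = (2 * c * ((S₂.card : ℕ) : ℝ) ^ ε') / 4 * ((S₂.card : ℕ) : ℝ) ^ (1 + ε') := by
          rw [hsplit']
          ring
      _ ≤ (2 * c * (n:ℝ) ^ ε') / 4 * ((S₂.card : ℕ) : ℝ) ^ (1 + ε') := by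
          apply mul_le_mul_of_nonneg_right _ hp1.le
          have := mul_le_mul_of_nonneg_left hr1 (show (0:ℝ) ≤ 2 * c by linarith)
          linarith
      _ ≤ lam / 4 * ((S₂.card : ℕ) : ℝ) ^ (1 + ε') := by
          apply mul_le_mul_of_nonneg_right _ hp1.le
          linarith
      _ ≤ lam / 4 * (m:ℝ) ^ (1 + ε') := by
          apply mul_le_mul_of_nonneg_left hr2 (by linarith)
      _ = (lam * (m:ℝ) ^ (1 + ε')) / 4 := by ring
      _ = (DS G S₀ : ℝ) / 4 := by rw [hD0eq]
      _ ≤ (DS G S₂ : ℝ) / 2 := by linarith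
      _ = (edgeCount G' : ℝ) := hedgeR.symm
end

section
/- For every constant 0 < ξ ≤ 1/2 there is an integer N such that for every n ≥ N there exists an n-vertex simple graph G with spectral radius λ(G) ≥ (1/2)·n^{ξ} such that every subgraph of G is a forest; in particular, every subgraph of G on n' vertices has at most n'−1 edges. (One may take G = S_n^{ξ}, the graph obtained from the star K_{1,⌈n^{2ξ}⌉−1} by subdividing one of its edges n−⌈n^{2ξ}⌉ times.) -/
section Aux

/-- The star graph on `Fin n` centered at the vertex with value `0`. -/
def starG (n : ℕ) : SimpleGraph (Fin n) :=
  SimpleGraph.fromRel (fun u _ => u.val = 0)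

lemma starG_adj {n : ℕ} {u v : Fin n} :
    (starG n).Adj u v ↔ u ≠ v ∧ (u.val = 0 ∨ v.val = 0) := by
  simp only [starG, SimpleGraph.fromRel_adj]

lemma starG_acyclic (n : ℕ) : (starG n).IsAcyclic := by
  intro v p hp
  have h3 := hp.three_le_length
  cases p with
  | nil => simp at h3
  | @cons _ a _ h₁ q =>
    cases q with
    | nil => simp at h3
    | @cons _ b _ h₂ r =>
      cases r with
      | nil => simp at h3
      | @cons _ c _ h₃ p₃ =>
        have hnd := hp.2
        simp only [SimpleGraph.Walk.support_cons, List.tail_cons, List.nodup_cons] at hnd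
        obtain ⟨hab, hbp, _⟩ := hnd
        have hac : a ≠ c := fun h => hab (List.mem_cons_of_mem _ (h ▸ p₃.start_mem_support))
        have hab' : a ≠ b := fun h => hab (h ▸ List.mem_cons_self)
        have hbv : b ≠ v := fun h => hbp (h ▸ p₃.end_mem_support)
        rw [starG_adj] at h₁ h₂ h₃
        rcases h₂.2 with ha0 | hb0
        · rcases h₃.2 with hb0 | hc0
          · exact hab' (Fin.ext (ha0.trans hb0.symm))
          · exact hac (Fin.ext (ha0.trans hc0.symm))
        · rcases h₁.2 with hv0 | ha0
          · exact hbv (Fin.ext (hb0.trans hv0.symm))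
          · exact hab' (Fin.ext (ha0.trans hb0.symm))

lemma acyclic_of_sub {m n : ℕ} (H : SimpleGraph (Fin m)) (h : IsSubgraphOf H (starG n)) :
    H.IsAcyclic := by
  obtain ⟨f, hf⟩ := h
  intro v p hp
  let hom : H →g starG n := ⟨f.toFun, fun {u w} h => hf u w h⟩
  exact starG_acyclic n (p.map hom) (hp.map f.injective)

lemma edge_bd {m n : ℕ} (hm : 1 ≤ m) (H : SimpleGraph (Fin m))
    (h : IsSubgraphOf H (starG n)) : edgeCount H ≤ m - 1 := by
  obtain ⟨f, hf⟩ := h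
  by_cases hab : ∃ a b, H.Adj a b
  · obtain ⟨a, b, hadj⟩ := hab
    have h0 : (f a).val = 0 ∨ (f b).val = 0 := ((starG_adj).1 (hf a b hadj)).2
    obtain ⟨u₀, hu₀⟩ : ∃ u₀ : Fin m, (f u₀).val = 0 := by
      rcases h0 with h | h
      · exact ⟨a, h⟩
      · exact ⟨b, h⟩
    have key : ∀ u w, H.Adj u w → u = u₀ ∨ w = u₀ := by
      intro u w huw
      rcases ((starG_adj).1 (hf u w huw)).2 with h | h
      · exact Or.inl (f.injective (Fin.ext (h.trans hu₀.symm)))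
      · exact Or.inr (f.injective (Fin.ext (h.trans hu₀.symm)))
    have hsub : H.edgeSet ⊆ (fun w => s(u₀, w)) '' (H.neighborSet u₀) := by
      intro e
      induction e with
      | h x y =>
        intro hxy
        rw [SimpleGraph.mem_edgeSet] at hxy
        rcases key x y hxy with rfl | rfl
        · exact ⟨y, hxy, rfl⟩
        · exact ⟨x, hxy.symm, Sym2.eq_swap⟩
    have h1 : edgeCount H = H.edgeSet.ncard := Nat.card_coe_set_eq _
    have h2 : H.edgeSet.ncard ≤ ((fun w => s(u₀, w)) '' (H.neighborSet u₀)).ncard :=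
      Set.ncard_le_ncard hsub ((H.neighborSet u₀).toFinite.image _)
    have h3 : ((fun w => s(u₀, w)) '' (H.neighborSet u₀)).ncard ≤ (H.neighborSet u₀).ncard :=
      Set.ncard_image_le (H.neighborSet u₀).toFinite
    have h4 : (H.neighborSet u₀).ncard ≤ ({u₀}ᶜ : Set (Fin m)).ncard :=
      Set.ncard_le_ncard (fun w hw => hw.ne') (Set.toFinite _)
    have h5 : ({u₀}ᶜ : Set (Fin m)).ncard = m - 1 := by
      simp [Set.ncard_eq_toFinset_card', Set.toFinset_compl, Finset.card_compl,
        Set.toFinset_singleton]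
    omega
  · have : H.edgeSet = ∅ := by
      ext e
      induction e with
      | h x y => simp only [SimpleGraph.mem_edgeSet, Set.mem_empty_iff_false, iff_false]
                 exact fun h => hab ⟨x, y, h⟩
    simp [edgeCount, this]

lemma eig_le {V : Type*} [Fintype V] (G : SimpleGraph V) {μ : ℝ}
    (h : μ ∈ {μ : ℝ | ∃ x : V → ℝ, x ≠ 0 ∧ (adjMat G).mulVec x = μ • x}) :
    μ ≤ Fintype.card V := by
  obtain ⟨x, hx0, hx⟩ := h
  obtain ⟨i, hi⟩ := Function.ne_iff.1 hx0
  obtain ⟨k, -, hk⟩ := Finset.exists_max_image Finset.univ (fun j => |x j|)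
    ⟨i, Finset.mem_univ i⟩
  have hk' : ∀ j, |x j| ≤ |x k| := fun j => hk j (Finset.mem_univ j)
  have hxk : 0 < |x k| := lt_of_lt_of_le (abs_pos.2 hi) (hk' i)
  have heq := congrFun hx k
  classical
  rw [adjMat, SimpleGraph.adjMatrix_mulVec_apply] at heq
  have hb : |μ| * |x k| ≤ (Fintype.card V : ℝ) * |x k| := by
    calc |μ| * |x k| = |(μ • x) k| := by rw [Pi.smul_apply, smul_eq_mul, abs_mul]
      _ = |∑ u ∈ G.neighborFinset k, x u| := by rw [← heq]
      _ ≤ ∑ u ∈ G.neighborFinset k, |x u| := Finset.abs_sum_le_sum_abs _ _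
      _ ≤ ∑ u ∈ G.neighborFinset k, |x k| := Finset.sum_le_sum (fun u _ => hk' u)
      _ = (G.neighborFinset k).card * |x k| := by rw [Finset.sum_const, nsmul_eq_mul]
      _ ≤ (Fintype.card V : ℝ) * |x k| := by
          apply mul_le_mul_of_nonneg_right _ (abs_nonneg _)
          exact_mod_cast Finset.card_le_univ _
  have := le_of_mul_le_mul_right hb hxk
  exact (le_abs_self μ).trans this

lemma specRad_ge {n : ℕ} (hn : 2 ≤ n) :
    Real.sqrt ((n : ℝ) - 1) ≤ specRad (starG n) := by
  classical
  set μ := Real.sqrt ((n : ℝ) - 1) with hμ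
  have hn1 : (1 : ℝ) ≤ (n : ℝ) := by exact_mod_cast Nat.one_le_of_lt hn
  have npos : 0 < n := by omega
  set z : Fin n := ⟨0, npos⟩ with hz
  set x : Fin n → ℝ := fun i => if i.val = 0 then μ else 1 with hxdef
  have hx0 : x ≠ 0 := by
    intro h
    have := congrFun h ⟨1, hn⟩
    simp [hxdef] at this
  have heig : (adjMat (starG n)).mulVec x = μ • x := by
    funext i
    rw [adjMat, SimpleGraph.adjMatrix_mulVec_apply]
    by_cases hi : i.val = 0
    · have hnb : (starG n).neighborFinset i = Finset.univ.erase i := by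
        ext u
        simp only [SimpleGraph.mem_neighborFinset, Finset.mem_erase, Finset.mem_univ,
          and_true, starG_adj]
        constructor
        · exact fun h => h.1.symm
        · intro h; exact ⟨fun e => h e.symm, Or.inl hi⟩
      rw [hnb]
      have hsum : ∑ u ∈ Finset.univ.erase i, x u = (n : ℝ) - 1 := by
        have : ∀ u ∈ Finset.univ.erase i, x u = 1 := by
          intro u hu
          have hune : u ≠ i := (Finset.mem_erase.1 hu).1
          have : u.val ≠ 0 := fun h => hune (Fin.ext (h.trans hi.symm))
          simp [hxdef, this]
        rw [Finset.sum_congr rfl this, Finset.sum_const, Finset.card_erase_of_mem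
          (Finset.mem_univ i)]
        simp [Nat.cast_sub (by omega : 1 ≤ n)]
      rw [hsum]
      have : x i = μ := by simp [hxdef, hi]
      rw [Pi.smul_apply, this, smul_eq_mul, hμ,
        Real.mul_self_sqrt (by linarith)]
    · have hnb : (starG n).neighborFinset i = {z} := by
        ext u
        simp only [SimpleGraph.mem_neighborFinset, Finset.mem_singleton, starG_adj]
        constructor
        · rintro ⟨hne, h0 | h0⟩
          · exact absurd h0 hi
          · exact Fin.ext h0
        · rintro rfl
          exact ⟨fun e => hi (e ▸ rfl), Or.inr rfl⟩
      rw [hnb, Finset.sum_singleton]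
      have hxz : x z = μ := by simp [hxdef, hz]
      have hxi : x i = 1 := by simp [hxdef, hi]
      rw [hxz, Pi.smul_apply, hxi, smul_eq_mul, mul_one]
  have hbdd : BddAbove {μ : ℝ | ∃ x : Fin n → ℝ, x ≠ 0 ∧ (adjMat (starG n)).mulVec x = μ • x} :=
    ⟨(Fintype.card (Fin n) : ℝ), fun ν hν => eig_le _ hν⟩
  exact le_csSup hbdd ⟨x, hx0, heig⟩

end Aux


/-- for `0 < ξ ≤ 1/2` and large `n` there is an `n`-vertex graph with
`λ(G) ≥ (1/2) n^ξ` all of whose subgraphs are forests, hence every subgraph on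
`n' ≥ 1` vertices has at most `n' - 1` edges. -/
theorem stmt4 (ξ : ℝ) (hξ0 : 0 < ξ) (hξ1 : ξ ≤ 1/2) :
    ∃ N : ℕ, ∀ n : ℕ, N ≤ n →
      ∃ G : SimpleGraph (Fin n),
        (1/2 : ℝ) * (n : ℝ) ^ ξ ≤ specRad G ∧
        (∀ (m : ℕ) (H : SimpleGraph (Fin m)), IsSubgraphOf H G → H.IsAcyclic) ∧
        (∀ m : ℕ, 1 ≤ m → ∀ H : SimpleGraph (Fin m), IsSubgraphOf H G →
          edgeCount H ≤ m - 1) := by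
  refine ⟨2, fun n hn => ⟨starG n, ?_, fun m H h => acyclic_of_sub H h,
    fun m hm H h => edge_bd hm H h⟩⟩
  have h1 := specRad_ge hn
  have hn1 : (1 : ℝ) ≤ (n : ℝ) := by exact_mod_cast Nat.one_le_of_lt hn
  have hn2 : (2 : ℝ) ≤ (n : ℝ) := by exact_mod_cast hn
  have hs : (n : ℝ) ^ ξ ≤ (n : ℝ) ^ (1/2 : ℝ) :=
    Real.rpow_le_rpow_of_exponent_le hn1 hξ1
  have hq : (1/2 : ℝ) * Real.sqrt n ≤ Real.sqrt ((n : ℝ) - 1) := by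
    rw [Real.le_sqrt (by positivity) (by linarith)]
    have hsq := Real.sq_sqrt (by positivity : (0:ℝ) ≤ (n : ℝ))
    nlinarith
  calc (1/2 : ℝ) * (n : ℝ) ^ ξ ≤ (1/2 : ℝ) * (n : ℝ) ^ (1/2 : ℝ) := by linarith
    _ = (1/2 : ℝ) * Real.sqrt n := by rw [Real.sqrt_eq_rpow]
    _ ≤ Real.sqrt ((n : ℝ) - 1) := hq
    _ ≤ specRad (starG n) := h1
end

section
/- Let 0 < ε ≤ 1/2 and c > 0, let G be an n-vertex simple graph with spectral radius λ = λ(G) ≥ c·n^{1/2+ε}, and let x be a nonnegative unit eigenvector of A(G) for λ. Set p = ⌈18^{(2−2ε)/ε}⌉ and η = 1/p², and let B₁ be a set of ⌈n/p⌉ vertices with the largest entries of x. If Σ_{v∈B₁} x_v² ≤ 1/2 − η, then the induced subgraph G − B₁ (on n' = n − ⌈n/p⌉ vertices) satisfies e(G − B₁) ≥ (2c/p³)·n^{3/2+ε}, and hence its average degree satisfies d(G − B₁) ≥ (4c/p³)·n'^{1/2+ε}. -/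
open Finset Classical in
lemma double_sum_eq {n : ℕ} (G : SimpleGraph (Fin n)) (S : Finset (Fin n)) :
    ∑ u ∈ S, ∑ v ∈ S, (if G.Adj u v then (1:ℝ) else 0)
      = 2 * (edgeCount (G.induce (S : Set (Fin n))) : ℝ) := by
  classical
  set s : Set (Fin n) := ↑S with hs
  set G' := G.induce s with hG'
  have hcount : edgeCount G' = G'.edgeFinset.card := by
    rw [edgeCount, Nat.card_coe_set_eq, Set.ncard_eq_toFinset_card']
    congr 1
  have hdeg : ∑ v : s, G'.degree v = 2 * G'.edgeFinset.card :=
    SimpleGraph.sum_degrees_eq_twice_card_edges G'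
  have h2 : ∀ u : s, ∑ v : s, (if G.Adj (u : Fin n) (v : Fin n) then (1:ℝ) else 0)
      = (G'.degree u : ℝ) := by
    intro u
    rw [SimpleGraph.degree, SimpleGraph.neighborFinset]
    rw [Finset.sum_boole]
    congr 1
    rw [Set.toFinset_card]
    rw [Fintype.card_subtype]
    congr 1
  have h1 : ∑ u ∈ S, ∑ v ∈ S, (if G.Adj u v then (1:ℝ) else 0)
      = ∑ u : s, ∑ v : s, (if G.Adj (u:Fin n) (v:Fin n) then (1:ℝ) else 0) := by
    rw [Finset.sum_subtype S (fun x => Finset.mem_coe.symm)]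
    refine Finset.sum_congr rfl fun u _ => ?_
    rw [Finset.sum_subtype S (fun x => Finset.mem_coe.symm)]
  rw [h1]
  rw [Finset.sum_congr rfl fun u _ => h2 u, ← Nat.cast_sum, hdeg, hcount]
  push_cast
  ring


set_option maxHeartbeats 1000000 in
/-- type 1 case: if the top `⌈n/p⌉` entries of the Perron eigenvector
carry total weight at most `1/2 - η`, then deleting them leaves many edges. -/
theorem stmt11 (ε c : ℝ) (hε0 : 0 < ε) (hε1 : ε ≤ 1/2) (hc : 0 < c)
    {n : ℕ} (G : SimpleGraph (Fin n)) (x : Fin n → ℝ)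
    (hx0 : ∀ v, 0 ≤ x v) (hx1 : ∑ v, x v ^ 2 = 1)
    (hlam : c * (n : ℝ) ^ ((1:ℝ)/2 + ε) ≤ specRad G)
    (heig : (adjMat G).mulVec x = specRad G • x)
    (p : ℕ) (hp : p = ⌈(18 : ℝ) ^ ((2 - 2 * ε) / ε)⌉₊)
    (B₁ : Finset (Fin n)) (hB₁card : B₁.card = ⌈(n : ℝ) / (p : ℝ)⌉₊)
    (hB₁top : ∀ u ∈ B₁, ∀ v ∉ B₁, x v ≤ x u)
    (hsum : ∑ v ∈ B₁, x v ^ 2 ≤ 1/2 - 1 / (p : ℝ) ^ 2) :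
    (2 * c / (p : ℝ) ^ 3) * (n : ℝ) ^ ((3:ℝ)/2 + ε) ≤
        (edgeCount (G.induce ((B₁ : Set (Fin n))ᶜ)) : ℝ) ∧
    (4 * c / (p : ℝ) ^ 3) * ((n - ⌈(n : ℝ) / (p : ℝ)⌉₊ : ℕ) : ℝ) ^ ((1:ℝ)/2 + ε) ≤
        avgDeg (G.induce ((B₁ : Set (Fin n))ᶜ)) := by
  classical
  rcases Nat.eq_zero_or_pos n with hn0 | hn
  · exfalso; subst hn0; simp at hx1
  have hN : (0:ℝ) < n := Nat.cast_pos.mpr hn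
  have hp1 : 1 ≤ p := by
    rw [hp]
    exact Nat.one_le_iff_ne_zero.mpr (Nat.pos_iff_ne_zero.mp
      (Nat.ceil_pos.mpr (Real.rpow_pos_of_pos (by norm_num) _)))
  have hP : (0:ℝ) < p := by exact_mod_cast hp1
  set L := specRad G with hL
  have hLpos : 0 < L := lt_of_lt_of_le (by positivity) hlam
  have heq : ∀ u, ∑ v ∈ G.neighborFinset u, x v = L * x u := by
    intro u
    have h := congrFun heig u
    rw [Pi.smul_apply, smul_eq_mul] at h
    rw [← h, adjMat]
    exact (G.adjMatrix_mulVec_apply u x).symm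
  set S := B₁ᶜ with hS
  set W : Finset (Fin n) → Finset (Fin n) → ℝ :=
    fun T U => ∑ u ∈ T, ∑ v ∈ U, (if G.Adj u v then x u * x v else 0) with hW
  have hWuniv : ∀ T : Finset (Fin n), W T Finset.univ = L * ∑ u ∈ T, x u ^ 2 := by
    intro T
    rw [hW, Finset.mul_sum]
    refine Finset.sum_congr rfl fun u _ => ?_
    have h1 : ∑ v ∈ Finset.univ, (if G.Adj u v then x u * x v else 0)
        = x u * ∑ v ∈ G.neighborFinset u, x v := by
      rw [Finset.mul_sum, SimpleGraph.neighborFinset_eq_filter, Finset.sum_filter]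
    rw [h1, heq u]; ring
  have hWsplit : ∀ T : Finset (Fin n), W T Finset.univ = W T B₁ + W T S := by
    intro T
    rw [hW]
    simp only []
    rw [← Finset.sum_add_distrib]
    refine Finset.sum_congr rfl fun u _ => ?_
    rw [hS]
    exact (Finset.sum_add_sum_compl B₁ _).symm
  have hWcomm : W S B₁ = W B₁ S := by
    rw [hW]
    simp only []
    rw [Finset.sum_comm]
    refine Finset.sum_congr rfl fun u _ => Finset.sum_congr rfl fun v _ => ?_
    by_cases hadj : G.Adj u v
    · rw [if_pos hadj, if_pos hadj.symm, mul_comm]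
    · have hadj' : ¬ G.Adj v u := fun h => hadj h.symm
      simp [hadj, hadj']
  have hterm_nonneg : ∀ u v : Fin n, 0 ≤ (if G.Adj u v then x u * x v else 0) := by
    intro u v
    by_cases hadj : G.Adj u v
    · rw [if_pos hadj]; exact mul_nonneg (hx0 u) (hx0 v)
    · rw [if_neg hadj]
  have hWmono : W B₁ S ≤ W B₁ Finset.univ := by
    refine Finset.sum_le_sum fun u _ => ?_
    exact Finset.sum_le_sum_of_subset_of_nonneg (Finset.subset_univ S)
      (fun v _ _ => hterm_nonneg u v)
  have hsq_split : ∑ u ∈ S, x u ^ 2 = 1 - ∑ v ∈ B₁, x v ^ 2 := by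
    have := Finset.sum_add_sum_compl B₁ (fun v => x v ^ 2)
    rw [hx1] at this
    rw [hS]; linarith
  -- lower bound on W S S
  have hlow : L * (2 / (p:ℝ)^2) ≤ W S S := by
    have e1 : W S Finset.univ = L * ∑ u ∈ S, x u ^ 2 := hWuniv S
    have e2 : W S Finset.univ = W S B₁ + W S S := hWsplit S
    have e5 : W B₁ Finset.univ = L * ∑ v ∈ B₁, x v ^ 2 := hWuniv B₁
    have e6 : W S B₁ ≤ L * ∑ v ∈ B₁, x v ^ 2 := by
      rw [← e5, hWcomm]; exact hWmono
    have h8 : (0:ℝ) < (p:ℝ)^2 := by positivity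
    have h9 : 2 / (p:ℝ)^2 ≤ 1 - 2 * ∑ v ∈ B₁, x v ^ 2 := by
      rw [div_le_iff₀ h8]
      have h10 : (1/(p:ℝ)^2) * (p:ℝ)^2 = 1 := by field_simp
      nlinarith [mul_le_mul_of_nonneg_right hsum (le_of_lt h8)]
    have h11 : L * (2 / (p:ℝ)^2) ≤ L * (1 - 2 * ∑ v ∈ B₁, x v ^ 2) :=
      mul_le_mul_of_nonneg_left h9 hLpos.le
    have h12 : L * (1 - 2 * ∑ v ∈ B₁, x v ^ 2) ≤ W S S := by
      rw [hsq_split] at e1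
      have h13 : L * (1 - ∑ v ∈ B₁, x v ^ 2) - L * ∑ v ∈ B₁, x v ^ 2
          = L * (1 - 2 * ∑ v ∈ B₁, x v ^ 2) := by ring
      linarith
    linarith
  -- entry bound
  have hB1lb : (n:ℝ)/(p:ℝ) ≤ (B₁.card : ℝ) := by rw [hB₁card]; exact Nat.le_ceil _
  have hxsq : ∀ u ∈ S, x u ^ 2 ≤ (p:ℝ)/(2*n) := by
    intro u hu
    have huB : u ∉ B₁ := by rw [hS, Finset.mem_compl] at hu; exact hu
    have h9 : (B₁.card : ℝ) * x u ^ 2 ≤ ∑ v ∈ B₁, x v ^ 2 := by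
      have := Finset.card_nsmul_le_sum B₁ (fun v => x v ^ 2) (x u ^ 2)
        (fun v hv => pow_le_pow_left₀ (hx0 u) (hB₁top v hv u huB) 2)
      simpa [nsmul_eq_mul] using this
    have h10 : (B₁.card : ℝ) * x u ^ 2 ≤ 1/2 := by
      have : (0:ℝ) < 1 / (p:ℝ)^2 := by positivity
      linarith
    have h11 : ((n:ℝ)/(p:ℝ)) * x u ^ 2 ≤ 1/2 :=
      le_trans (mul_le_mul_of_nonneg_right hB1lb (sq_nonneg (x u))) h10
    rw [div_mul_eq_mul_div, div_le_iff₀ hP] at h11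
    rw [le_div_iff₀ (by positivity : (0:ℝ) < 2*(n:ℝ))]
    nlinarith
  have hxprod : ∀ u ∈ S, ∀ v ∈ S, x u * x v ≤ (p:ℝ)/(2*n) := by
    intro u hu v hv
    have h1 := hxsq u hu
    have h2 := hxsq v hv
    nlinarith [sq_nonneg (x u - x v)]
  -- upper bound
  set e : ℝ := (edgeCount (G.induce ((B₁ : Set (Fin n))ᶜ)) : ℝ) with he
  have hup : W S S ≤ ((p:ℝ)/(2*n)) * (2 * e) := by
    have hd : ∑ u ∈ S, ∑ v ∈ S, (if G.Adj u v then (1:ℝ) else 0) = 2 * e := by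
      rw [he, ← Finset.coe_compl, ← hS]
      exact double_sum_eq G S
    calc W S S ≤ ∑ u ∈ S, ∑ v ∈ S, (if G.Adj u v then (p:ℝ)/(2*n) else 0) := by
          refine Finset.sum_le_sum fun u hu => Finset.sum_le_sum fun v hv => ?_
          by_cases hadj : G.Adj u v
          · rw [if_pos hadj, if_pos hadj]; exact hxprod u hu v hv
          · simp [hadj]
      _ = ((p:ℝ)/(2*n)) * ∑ u ∈ S, ∑ v ∈ S, (if G.Adj u v then (1:ℝ) else 0) := by
          rw [Finset.mul_sum]
          refine Finset.sum_congr rfl fun u _ => ?_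
          rw [Finset.mul_sum]
          refine Finset.sum_congr rfl fun v _ => ?_
          by_cases hadj : G.Adj u v <;> simp [hadj]
      _ = ((p:ℝ)/(2*n)) * (2 * e) := by rw [hd]
  have hepos : 0 ≤ e := by rw [he]; positivity
  clear_value W
  clear hW hWuniv hWsplit hWcomm hWmono heq heig
  -- key algebraic inequality
  have hkey : 2 * L * (n:ℝ) ≤ (p:ℝ)^3 * e := by
    have h := le_trans hlow hup
    have h' : L * 2 / (p:ℝ)^2 ≤ (p:ℝ) * (2*e) / (2*(n:ℝ)) := by
      rw [mul_div_assoc, div_mul_eq_mul_div] at *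
      exact h
    rw [div_le_div_iff₀ (by positivity) (by positivity)] at h'
    nlinarith [h']
  clear_value L
  clear hlow hup
  -- part 1
  have hsplitpow : (n:ℝ) ^ ((3:ℝ)/2 + ε) = (n:ℝ) ^ ((1:ℝ)/2 + ε) * n := by
    rw [show (3:ℝ)/2 + ε = ((1:ℝ)/2 + ε) + 1 by ring, Real.rpow_add hN, Real.rpow_one]
  have hpart1 : (2 * c / (p:ℝ)^3) * (n:ℝ) ^ ((3:ℝ)/2 + ε) ≤ e := by
    rw [hsplitpow, div_mul_eq_mul_div, div_le_iff₀ (by positivity : (0:ℝ) < (p:ℝ)^3)]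
    have hch : c * (n:ℝ) ^ ((1:ℝ)/2 + ε) * (2*(n:ℝ)) ≤ L * (2*(n:ℝ)) :=
      mul_le_mul_of_nonneg_right hlam (by positivity)
    nlinarith [hch, hkey]
  refine ⟨hpart1, ?_⟩
  -- part 2
  have hScard : (n - ⌈(n:ℝ)/(p:ℝ)⌉₊ : ℕ) = S.card := by
    rw [hS, Finset.card_compl, Fintype.card_fin, hB₁card]
  have hNatcard : Nat.card ↥((B₁ : Set (Fin n))ᶜ) = S.card := by
    rw [← Finset.coe_compl, ← hS, Nat.card_coe_set_eq, Set.ncard_coe_finset]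
  have hS1 : 0 < S.card := by
    rw [hS, Finset.card_compl, Fintype.card_fin]
    have hle : B₁.card ≤ n := by simpa using Finset.card_le_univ B₁
    rcases Nat.lt_or_ge B₁.card n with hlt | hge
    · omega
    · exfalso
      have hBall : B₁ = Finset.univ :=
        Finset.eq_univ_of_card B₁ (by rw [Fintype.card_fin]; omega)
      rw [hBall, hx1] at hsum
      have : (0:ℝ) < 1 / (p:ℝ)^2 := by positivity
      linarith
  have hScpos : (0:ℝ) < (S.card : ℝ) := Nat.cast_pos.mpr hS1
  have hScn : (S.card : ℝ) ≤ (n:ℝ) := by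
    exact_mod_cast le_trans (Finset.card_le_univ S) (le_of_eq (Fintype.card_fin n))
  rw [avgDeg, hNatcard, hScard, ← he]
  rw [le_div_iff₀ hScpos]
  have hpow2 : (S.card:ℝ) ^ ((3:ℝ)/2 + ε) = ((S.card:ℝ)) ^ ((1:ℝ)/2 + ε) * (S.card:ℝ) := by
    rw [show (3:ℝ)/2 + ε = ((1:ℝ)/2 + ε) + 1 by ring, Real.rpow_add hScpos, Real.rpow_one]
  have hmono : ((S.card:ℝ)) ^ ((3:ℝ)/2 + ε) ≤ (n:ℝ) ^ ((3:ℝ)/2 + ε) :=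
    Real.rpow_le_rpow (le_of_lt hScpos) hScn (by linarith)
  have hfinal : (4 * c / (p:ℝ)^3) * (n:ℝ) ^ ((3:ℝ)/2 + ε) ≤ 2 * e := by
    have := mul_le_mul_of_nonneg_left hpart1 (by norm_num : (0:ℝ) ≤ 2)
    calc (4 * c / (p:ℝ)^3) * (n:ℝ) ^ ((3:ℝ)/2 + ε)
        = 2 * ((2 * c / (p:ℝ)^3) * (n:ℝ) ^ ((3:ℝ)/2 + ε)) := by ring
      _ ≤ 2 * e := this
  calc (4 * c / (p:ℝ)^3) * (S.card:ℝ) ^ ((1:ℝ)/2 + ε) * (S.card:ℝ)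
      = (4 * c / (p:ℝ)^3) * ((S.card:ℝ) ^ ((3:ℝ)/2 + ε)) := by rw [mul_assoc, ← hpow2]
    _ ≤ (4 * c / (p:ℝ)^3) * ((n:ℝ) ^ ((3:ℝ)/2 + ε)) :=
        mul_le_mul_of_nonneg_left hmono (by positivity)
    _ ≤ 2 * e := hfinal
end

section
/- Let 0 < ε ≤ 1/2 and c > 0, let n be sufficiently large, let G be an n-vertex simple graph with spectral radius λ = λ(G) ≥ c·n^{1/2+ε}, and let x be a nonnegative unit eigenvector of A(G) for λ. Set p = ⌈18^{(2−2ε)/ε}⌉ and η = 1/p², and let B₁ be a set of ⌈n/p⌉ vertices with the largest entries of x. If Σ_{v∈B₁} x_v² > 1/2 − η, then G contains a subgraph G₁ with n/p ≤ |V(G₁)| ≤ 3n/p and λ(G₁) ≥ λ/(6√p); in particular λ(G₁) ≥ c·|V(G₁)|^{1/2+ε}. -/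
lemma euc_sum_apply {k : ℕ} {ι : Type*} (s : Finset ι) (f : ι → EuclideanSpace ℝ (Fin k)) (j : Fin k) :
    (∑ i ∈ s, f i) j = ∑ i ∈ s, f i j := by
  have h := map_sum (WithLp.linearEquiv 2 ℝ (Fin k → ℝ)) f s
  have h2 := congrFun h j
  rw [Finset.sum_apply] at h2
  exact h2

open Matrix Finset in
lemma specKey {m : ℕ} (hm : 0 < m) (G : SimpleGraph (Fin m)) (z : Fin m → ℝ) :
    0 ≤ specRad G ∧ ∑ j, ((adjMat G).mulVec z j)^2 ≤ (specRad G)^2 * ∑ j, (z j)^2 := by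
  classical
  set A := adjMat G with hAdef
  have hentry : ∀ j k, A j k = if G.Adj j k then (1:ℝ) else 0 := by
    intro j k; simp [hAdef, adjMat, SimpleGraph.adjMatrix_apply]
  have hnn : ∀ j k, 0 ≤ A j k := by intro j k; rw [hentry]; split <;> norm_num
  have hle1 : ∀ j k, A j k ≤ 1 := by intro j k; rw [hentry]; split <;> norm_num
  have hsymmA : ∀ j k, A j k = A k j := by
    intro j k; rw [hentry, hentry]; simp [SimpleGraph.adj_comm]
  have hH : A.IsHermitian := by
    rw [Matrix.IsHermitian]
    ext j k
    simp only [Matrix.conjTranspose_apply, star_trivial]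
    exact hsymmA k j
  set b := hH.eigenvectorBasis with hb
  set μ := hH.eigenvalues with hμ
  set v : Fin m → Fin m → ℝ := fun i => ⇑(b i) with hv
  -- orthonormality
  have horth : ∀ i j, ∑ k, v i k * v j k = if i = j then (1:ℝ) else 0 := by
    intro i j
    have h := (orthonormal_iff_ite (𝕜 := ℝ)).mp b.orthonormal i j
    simpa [hv, PiLp.inner_apply, RCLike.inner_apply, starRingEnd_apply, star_trivial, mul_comm] using h
  -- representation
  have hrepr : ∀ y : Fin m → ℝ, ∀ j, y j = ∑ i, (∑ k, v i k * y k) * v i j := by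
    intro y j
    have h := b.sum_repr' (WithLp.toLp 2 y : EuclideanSpace ℝ (Fin m))
    have h2 := congrArg (fun w : EuclideanSpace ℝ (Fin m) => w j) h
    simp only [PiLp.inner_apply, RCLike.inner_apply, starRingEnd_apply, star_trivial] at h2
    rw [euc_sum_apply] at h2
    simp only [PiLp.smul_apply, smul_eq_mul] at h2
    simpa [hv, mul_comm] using h2.symm
  set coef : (Fin m → ℝ) → Fin m → ℝ := fun y i => ∑ k, v i k * y k with hcoef
  -- product expansion
  have P1 : ∀ a c : Fin m → ℝ,
      ∑ j, (∑ i, a i * v i j) * (∑ i, c i * v i j) = ∑ i, a i * c i := by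
    intro a c
    calc ∑ j, (∑ i, a i * v i j) * (∑ i, c i * v i j)
        = ∑ j, ∑ i, ∑ l, a i * c l * (v i j * v l j) := by
          refine Finset.sum_congr rfl fun j _ => ?_
          rw [Finset.sum_mul_sum]
          exact Finset.sum_congr rfl fun i _ => Finset.sum_congr rfl fun l _ => by ring
      _ = ∑ i, ∑ l, ∑ j, a i * c l * (v i j * v l j) := by
          rw [Finset.sum_comm]
          exact Finset.sum_congr rfl fun i _ => Finset.sum_comm
      _ = ∑ i, ∑ l, a i * c l * (∑ j, v i j * v l j) := by
          refine Finset.sum_congr rfl fun i _ => Finset.sum_congr rfl fun l _ => ?_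
          rw [Finset.mul_sum]
      _ = ∑ i, a i * c i := by
          refine Finset.sum_congr rfl fun i _ => ?_
          simp_rw [horth, mul_ite, mul_one, mul_zero]
          simp
  -- eigen equation pointwise
  have heig : ∀ i j, A.mulVec (v i) j = μ i * v i j := by
    intro i j
    have h := hH.mulVec_eigenvectorBasis i
    have h2 := congrFun h j
    simpa [Pi.smul_apply, smul_eq_mul] using h2
  -- mulVec expansion
  have hAyj : ∀ (y : Fin m → ℝ) (j : Fin m),
      A.mulVec y j = ∑ i, (μ i * coef y i) * v i j := by
    intro y j
    calc A.mulVec y j = ∑ k, A j k * y k := by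
          simp [Matrix.mulVec, dotProduct]
      _ = ∑ k, A j k * ∑ i, coef y i * v i k := by
          refine Finset.sum_congr rfl fun k _ => ?_
          rw [← hrepr y k]
      _ = ∑ k, ∑ i, coef y i * (A j k * v i k) := by
          refine Finset.sum_congr rfl fun k _ => ?_
          rw [Finset.mul_sum]
          exact Finset.sum_congr rfl fun i _ => by ring
      _ = ∑ i, ∑ k, coef y i * (A j k * v i k) := Finset.sum_comm
      _ = ∑ i, coef y i * (A.mulVec (v i) j) := by
          refine Finset.sum_congr rfl fun i _ => ?_
          rw [← Finset.mul_sum]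
          congr 1
      _ = ∑ i, (μ i * coef y i) * v i j := by
          refine Finset.sum_congr rfl fun i _ => ?_
          rw [heig]
          ring
  have hsumsq : ∀ y : Fin m → ℝ, ∑ j, (y j)^2 = ∑ i, (coef y i)^2 := by
    intro y
    calc ∑ j, (y j)^2 = ∑ j, (∑ i, coef y i * v i j) * (∑ i, coef y i * v i j) := by
          refine Finset.sum_congr rfl fun j _ => ?_
          rw [pow_two, ← hrepr y j]
      _ = ∑ i, coef y i * coef y i := P1 _ _
      _ = ∑ i, (coef y i)^2 := by simp [pow_two]
  have hAsq : ∀ y : Fin m → ℝ, ∑ j, (A.mulVec y j)^2 = ∑ i, (μ i * coef y i)^2 := by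
    intro y
    calc ∑ j, (A.mulVec y j)^2
        = ∑ j, (∑ i, (μ i * coef y i) * v i j) * (∑ i, (μ i * coef y i) * v i j) := by
          refine Finset.sum_congr rfl fun j _ => ?_
          rw [pow_two, hAyj y j]
      _ = ∑ i, (μ i * coef y i) * (μ i * coef y i) := P1 _ _
      _ = ∑ i, (μ i * coef y i)^2 := by simp [pow_two]
  have hray : ∀ y : Fin m → ℝ, ∑ j, y j * A.mulVec y j = ∑ i, μ i * (coef y i)^2 := by
    intro y
    calc ∑ j, y j * A.mulVec y j
        = ∑ j, (∑ i, coef y i * v i j) * (∑ i, (μ i * coef y i) * v i j) := by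
          refine Finset.sum_congr rfl fun j _ => ?_
          rw [← hrepr y j, hAyj y j]
      _ = ∑ i, coef y i * (μ i * coef y i) := P1 _ _
      _ = ∑ i, μ i * (coef y i)^2 := by
          refine Finset.sum_congr rfl fun i _ => by ring
  -- argmaxes
  have huniv : (Finset.univ : Finset (Fin m)).Nonempty := ⟨⟨0, hm⟩, mem_univ _⟩
  obtain ⟨i₁, -, hmax1⟩ := Finset.exists_max_image univ μ huniv
  obtain ⟨i₀, -, hmax0⟩ := Finset.exists_max_image univ (fun i => |μ i|) huniv
  -- bddAbove
  have hbdd : BddAbove {t : ℝ | ∃ x : Fin m → ℝ, x ≠ 0 ∧ A.mulVec x = t • x} := by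
    refine ⟨(m : ℝ), fun t ht => ?_⟩
    obtain ⟨y, hy0, heq⟩ := ht
    obtain ⟨j, -, hj⟩ := Finset.exists_max_image univ (fun k => |y k|) huniv
    have hypos : 0 < |y j| := by
      obtain ⟨k, hk⟩ := Function.ne_iff.mp hy0
      exact lt_of_lt_of_le (abs_pos.mpr hk) (hj k (mem_univ k))
    have h1 : |t| * |y j| ≤ (m : ℝ) * |y j| := by
      have h2 : A.mulVec y j = t * y j := by
        have := congrFun heq j
        simpa [Pi.smul_apply, smul_eq_mul] using this
      have h3 : |t * y j| = |A.mulVec y j| := by rw [h2]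
      rw [abs_mul] at h3
      rw [h3]
      have h4 : |A.mulVec y j| ≤ ∑ k, |A j k * y k| := by
        rw [show A.mulVec y j = ∑ k, A j k * y k by simp [Matrix.mulVec, dotProduct]]
        exact Finset.abs_sum_le_sum_abs _ _
      have h5 : ∑ k, |A j k * y k| ≤ ∑ _k : Fin m, (1 : ℝ) * |y j| := by
        refine Finset.sum_le_sum fun k _ => ?_
        rw [abs_mul]
        exact mul_le_mul (by rw [abs_of_nonneg (hnn j k)]; exact hle1 j k)
          (hj k (mem_univ k)) (abs_nonneg _) zero_le_one
      calc |A.mulVec y j| ≤ ∑ _k : Fin m, (1:ℝ) * |y j| := le_trans h4 h5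
        _ = (m : ℝ) * |y j| := by simp [Finset.sum_const, mul_comm]
    exact le_trans (le_abs_self t) (le_of_mul_le_mul_right h1 hypos)
  have hvne : ∀ i, v i ≠ (0 : Fin m → ℝ) := by
    intro i h
    have h1 := horth i i
    rw [h] at h1
    simp at h1
  have hmem : μ i₁ ∈ {t : ℝ | ∃ x : Fin m → ℝ, x ≠ 0 ∧ A.mulVec x = t • x} := by
    refine ⟨v i₁, hvne i₁, ?_⟩
    funext j
    rw [heig i₁ j]
    simp
  have hspec1 : μ i₁ ≤ specRad G := le_csSup hbdd hmem
  -- Perron-Frobenius-type bound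
  have habs : |μ i₀| ≤ μ i₁ := by
    set w : Fin m → ℝ := fun j => |v i₀ j| with hw
    have hsum1 : ∑ j, (v i₀ j)^2 = 1 := by
      have := horth i₀ i₀
      simpa [pow_two] using this
    have hstep : |μ i₀| * 1 ≤ ∑ j, w j * A.mulVec w j := by
      rw [← hsum1]
      rw [Finset.mul_sum]
      have h1 : ∀ j, |μ i₀| * (v i₀ j)^2 = |A.mulVec (v i₀) j| * w j := by
        intro j
        rw [heig i₀ j, abs_mul, hw]
        simp only []
        rw [pow_two, ← abs_mul_abs_self (v i₀ j)]
        ring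
      rw [Finset.sum_congr rfl fun j _ => h1 j]
      refine Finset.sum_le_sum fun j _ => ?_
      have h2 : |A.mulVec (v i₀) j| ≤ A.mulVec w j := by
        rw [show A.mulVec (v i₀) j = ∑ k, A j k * v i₀ k by simp [Matrix.mulVec, dotProduct]]
        rw [show A.mulVec w j = ∑ k, A j k * w k by simp [Matrix.mulVec, dotProduct]]
        refine le_trans (Finset.abs_sum_le_sum_abs _ _) (Finset.sum_le_sum fun k _ => ?_)
        rw [abs_mul, abs_of_nonneg (hnn j k)]
      have h3 : 0 ≤ w j := abs_nonneg _
      calc |A.mulVec (v i₀) j| * w j ≤ A.mulVec w j * w j :=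
            mul_le_mul_of_nonneg_right h2 h3
        _ = w j * A.mulVec w j := by ring
    have hup : ∑ j, w j * A.mulVec w j ≤ μ i₁ * 1 := by
      rw [hray w]
      have h1 : ∑ i, μ i * (coef w i)^2 ≤ ∑ i, μ i₁ * (coef w i)^2 :=
        Finset.sum_le_sum fun i _ => mul_le_mul_of_nonneg_right (hmax1 i (mem_univ i)) (sq_nonneg _)
      rw [← Finset.mul_sum] at h1
      have h2 : ∑ i, (coef w i)^2 = ∑ j, (w j)^2 := (hsumsq w).symm
      have h3 : ∑ j, (w j)^2 = 1 := by
        rw [← hsum1]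
        refine Finset.sum_congr rfl fun j _ => ?_
        rw [hw]
        simp [sq_abs]
      calc ∑ i, μ i * (coef w i)^2 ≤ μ i₁ * ∑ i, (coef w i)^2 := h1
        _ = μ i₁ * 1 := by rw [h2, h3]
    linarith [le_trans hstep hup]
  have hμ₁nn : 0 ≤ μ i₁ := le_trans (abs_nonneg _) habs
  have hspec0 : 0 ≤ specRad G := le_trans hμ₁nn hspec1
  refine ⟨hspec0, ?_⟩
  calc ∑ j, (A.mulVec z j)^2 = ∑ i, (μ i * coef z i)^2 := hAsq z
    _ ≤ ∑ i, (μ i₁)^2 * (coef z i)^2 := by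
        refine Finset.sum_le_sum fun i _ => ?_
        rw [mul_pow]
        refine mul_le_mul_of_nonneg_right ?_ (sq_nonneg _)
        have h1 : |μ i| ≤ μ i₁ := le_trans (hmax0 i (mem_univ i)) habs
        calc (μ i)^2 = |μ i|^2 := (sq_abs _).symm
          _ ≤ (μ i₁)^2 := by
              refine pow_le_pow_left₀ (abs_nonneg _) h1 2
    _ = (μ i₁)^2 * ∑ i, (coef z i)^2 := by rw [Finset.mul_sum]
    _ = (μ i₁)^2 * ∑ j, (z j)^2 := by rw [hsumsq z]
    _ ≤ (specRad G)^2 * ∑ j, (z j)^2 := by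
        refine mul_le_mul_of_nonneg_right (pow_le_pow_left₀ hμ₁nn hspec1 2) ?_
        exact Finset.sum_nonneg fun j _ => sq_nonneg _

open Finset in
set_option maxHeartbeats 1600000 in
/-- type 2 case: if the top `⌈n/p⌉` entries of the Perron eigenvector
carry total weight more than `1/2 - η`, then `G` has a subgraph `G₁` with
`n/p ≤ |V(G₁)| ≤ 3n/p` and `λ(G₁) ≥ λ/(6√p) ≥ c|V(G₁)|^{1/2+ε}`. -/
theorem stmt12 (ε c : ℝ) (hε0 : 0 < ε) (hε1 : ε ≤ 1/2) (hc : 0 < c) :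
    ∃ N : ℕ, ∀ n : ℕ, N ≤ n → ∀ G : SimpleGraph (Fin n), ∀ x : Fin n → ℝ,
      (∀ v, 0 ≤ x v) → (∑ v, x v ^ 2 = 1) →
      c * (n : ℝ) ^ ((1:ℝ)/2 + ε) ≤ specRad G →
      (adjMat G).mulVec x = specRad G • x →
      ∀ p : ℕ, p = ⌈(18 : ℝ) ^ ((2 - 2 * ε) / ε)⌉₊ →
      ∀ B₁ : Finset (Fin n), B₁.card = ⌈(n : ℝ) / (p : ℝ)⌉₊ →
      (∀ u ∈ B₁, ∀ v ∉ B₁, x v ≤ x u) →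
      1/2 - 1 / (p : ℝ) ^ 2 < ∑ v ∈ B₁, x v ^ 2 →
      ∃ (m : ℕ) (G₁ : SimpleGraph (Fin m)), IsSubgraphOf G₁ G ∧
        (n : ℝ) / (p : ℝ) ≤ (m : ℝ) ∧ (m : ℝ) ≤ 3 * (n : ℝ) / (p : ℝ) ∧
        specRad G / (6 * Real.sqrt (p : ℝ)) ≤ specRad G₁ ∧
        c * (m : ℝ) ^ ((1:ℝ)/2 + ε) ≤ specRad G₁ := by
  classical
  refine ⟨2 * ⌈(18 : ℝ) ^ ((2 - 2 * ε) / ε)⌉₊ + 2, ?_⟩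
  intro n hn G x hx0 hx1 hLam hxeig p hp B₁ hB₁card hB₁top hB₁w
  rw [← hp] at hn
  -- basic numeric facts
  have hPle : (18 : ℝ) ^ ((2 - 2 * ε) / ε) ≤ (p : ℝ) := hp ▸ Nat.le_ceil _
  have hexp2 : (2:ℝ) ≤ (2 - 2*ε)/ε := by rw [le_div_iff₀ hε0]; linarith
  have h182 : (18:ℝ)^(2:ℝ) = 324 := by
    rw [show (2:ℝ) = ((2:ℕ):ℝ) by norm_num, Real.rpow_natCast]; norm_num
  have hP324 : (324:ℝ) ≤ (p : ℝ) := by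
    have h1 : (18:ℝ)^(2:ℝ) ≤ 18^((2-2*ε)/ε) :=
      Real.rpow_le_rpow_of_exponent_le (by norm_num) hexp2
    rw [h182] at h1; linarith
  have hppos : (0:ℝ) < (p:ℝ) := by linarith
  have hnreal : 2*(p:ℝ) + 2 ≤ (n:ℝ) := by exact_mod_cast hn
  have hnpos : (0:ℝ) < (n:ℝ) := by linarith
  set bb := B₁.card with hbbdef
  have hbLow : (n:ℝ)/(p:ℝ) ≤ (bb:ℝ) := by rw [hB₁card]; exact Nat.le_ceil _
  have hbUp : (bb:ℝ) < (n:ℝ)/(p:ℝ) + 1 := by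
    rw [hB₁card]; exact Nat.ceil_lt_add_one (by positivity)
  have hbposR : (0:ℝ) < (bb:ℝ) := by
    have : (0:ℝ) < (n:ℝ)/(p:ℝ) := by positivity
    linarith
  have hbpos : 0 < bb := by exact_mod_cast hbposR
  have hbP : (n:ℝ) ≤ (p:ℝ) * (bb:ℝ) := by
    rw [div_le_iff₀ hppos] at hbLow; linarith
  have haux : 2*(n:ℝ) + 2*(p:ℝ) ≤ (n:ℝ)*(p:ℝ) := by
    have k1 : (n:ℝ)*324 ≤ (n:ℝ)*(p:ℝ) := mul_le_mul_of_nonneg_left hP324 (le_of_lt hnpos)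
    linarith
  have hbUp' : ((bb:ℝ) - 1) * (p:ℝ) < (n:ℝ) := (lt_div_iff₀ hppos).mp (by linarith)
  have h2bR : 2*(bb:ℝ) ≤ (n:ℝ) := by
    have k2 : (2*(bb:ℝ)) * (p:ℝ) < (n:ℝ)*(p:ℝ) := by nlinarith [hbUp', haux]
    exact le_of_lt (lt_of_mul_lt_mul_right k2 (le_of_lt hppos))
  have h2bn : 2*bb ≤ n := by exact_mod_cast h2bR
  -- the weighted-degree function
  set s : Fin n → ℝ := fun w => ∑ u ∈ B₁, adjMat G w u * x u with hs
  -- choose B₂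
  have hcompl : bb ≤ B₁ᶜ.card := by
    rw [Finset.card_compl]
    simp only [Fintype.card_fin]
    omega
  obtain ⟨B₂0, hB₂0sub, hB₂0card⟩ := Finset.exists_subset_card_eq hcompl
  set cand := (B₁ᶜ.powerset).filter (fun B => B.card = bb) with hcand
  have hcandne : cand.Nonempty :=
    ⟨B₂0, by simp [hcand, Finset.mem_filter, Finset.mem_powerset, hB₂0sub, hB₂0card]⟩
  obtain ⟨B₂, hB₂mem, hB₂max⟩ := Finset.exists_max_image cand (fun B => ∑ w ∈ B, s w ^ 2) hcandne
  have hB₂sub : B₂ ⊆ B₁ᶜ := Finset.mem_powerset.mp (Finset.mem_filter.mp hB₂mem).1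
  have hB₂card : B₂.card = bb := (Finset.mem_filter.mp hB₂mem).2
  have hdisj : Disjoint B₁ B₂ := Finset.disjoint_left.mpr
    (fun a ha ha2 => (Finset.mem_compl.mp (hB₂sub ha2)) ha)
  -- exchange property
  have hxch : ∀ w ∈ B₁ᶜ \ B₂, ∀ u ∈ B₂, s w ^ 2 ≤ s u ^ 2 := by
    intro w hw u hu
    by_contra hlt
    push_neg at hlt
    have hwB₁c : w ∈ B₁ᶜ := (Finset.mem_sdiff.mp hw).1
    have hwnB₂ : w ∉ B₂ := (Finset.mem_sdiff.mp hw).2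
    have hwne : w ∉ B₂.erase u := fun h => hwnB₂ (Finset.erase_subset _ _ h)
    have hsub' : insert w (B₂.erase u) ⊆ B₁ᶜ := by
      intro a ha
      rcases Finset.mem_insert.mp ha with h | h
      · exact h ▸ hwB₁c
      · exact hB₂sub (Finset.erase_subset _ _ h)
    have hcard' : (insert w (B₂.erase u)).card = bb := by
      rw [Finset.card_insert_of_notMem hwne, Finset.card_erase_of_mem hu, hB₂card]
      omega
    have hmem' : insert w (B₂.erase u) ∈ cand := by
      simp [hcand, Finset.mem_filter, Finset.mem_powerset, hsub', hcard']
    have hle := hB₂max _ hmem'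
    rw [Finset.sum_insert hwne] at hle
    have h2 : ∑ u' ∈ B₂.erase u, s u' ^ 2 + s u ^ 2 = ∑ u' ∈ B₂, s u' ^ 2 :=
      Finset.sum_erase_add _ _ hu
    linarith
  -- weight W
  set W := ∑ v ∈ B₁, x v ^ 2 with hW
  have hWle1 : W ≤ 1 := by
    rw [hW, ← hx1]
    exact Finset.sum_le_sum_of_subset_of_nonneg (Finset.subset_univ _) (fun i _ _ => sq_nonneg _)
  have hP2 : (1:ℝ) / (p:ℝ)^2 ≤ 1/9 := by
    rw [div_le_div_iff₀ (by positivity) (by norm_num)]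
    nlinarith
  have hWpos : 0 < W := by
    have := hB₁w
    linarith
  have hLampos : 0 < specRad G := lt_of_lt_of_le (by positivity) hLam
  -- the key identity  ∑ s·x = λ W
  have lamW : ∑ w, s w * x w = specRad G * W := by
    have hAsymm : ∀ a b : Fin n, adjMat G a b = adjMat G b a := by
      intro a b; simp [adjMat, SimpleGraph.adjMatrix_apply, SimpleGraph.adj_comm]
    calc ∑ w, s w * x w = ∑ w, ∑ u ∈ B₁, (adjMat G w u * x u) * x w := by
          refine Finset.sum_congr rfl fun w _ => ?_
          rw [hs]; rw [Finset.sum_mul]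
      _ = ∑ u ∈ B₁, ∑ w, (adjMat G w u * x u) * x w := Finset.sum_comm
      _ = ∑ u ∈ B₁, x u * ((adjMat G).mulVec x u) := by
          refine Finset.sum_congr rfl fun u _ => ?_
          rw [show (adjMat G).mulVec x u = ∑ w, adjMat G u w * x w by
            simp [Matrix.mulVec, dotProduct]]
          rw [Finset.mul_sum]
          refine Finset.sum_congr rfl fun w _ => ?_
          rw [hAsymm w u]; ring
      _ = ∑ u ∈ B₁, x u * (specRad G * x u) := by
          refine Finset.sum_congr rfl fun u _ => ?_
          rw [hxeig]; simp
      _ = specRad G * W := by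
          rw [hW, Finset.mul_sum]
          refine Finset.sum_congr rfl fun u _ => by ring
  have hT : (specRad G * W)^2 ≤ ∑ w, s w ^ 2 := by
    have hcs := Finset.sum_mul_sq_le_sq_mul_sq Finset.univ s x
    rw [hx1, mul_one] at hcs
    rw [← lamW]
    exact hcs
  -- partition
  set R := B₁ᶜ \ B₂ with hR
  have hdisj2 : Disjoint (B₁ ∪ B₂) R := by
    rw [Finset.disjoint_left]
    intro a ha haR
    rw [hR, Finset.mem_sdiff, Finset.mem_compl] at haR
    rcases Finset.mem_union.mp ha with h | h
    · exact haR.1 h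
    · exact haR.2 h
  have hunion : (B₁ ∪ B₂) ∪ R = Finset.univ := by
    ext a
    simp only [Finset.mem_union, Finset.mem_sdiff, Finset.mem_compl, Finset.mem_univ, hR,
      iff_true]
    by_cases h1 : a ∈ B₁
    · tauto
    · by_cases h2 : a ∈ B₂ <;> tauto
  have hsplit : ∑ w, s w ^ 2 = (∑ w ∈ B₁ ∪ B₂, s w ^ 2) + ∑ w ∈ R, s w ^ 2 := by
    rw [← Finset.sum_union hdisj2, hunion]
  have hRb : ∑ w ∈ R, s w ^ 2 ≤ (p:ℝ) * ∑ u ∈ B₂, s u ^ 2 := by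
    have hB₂nn : (0:ℝ) ≤ ∑ u ∈ B₂, s u ^ 2 := Finset.sum_nonneg fun u _ => sq_nonneg _
    have hper : ∀ w ∈ R, (bb:ℝ) * s w ^ 2 ≤ ∑ u ∈ B₂, s u ^ 2 := by
      intro w hw
      have h1 : ∑ _u ∈ B₂, s w ^ 2 ≤ ∑ u ∈ B₂, s u ^ 2 :=
        Finset.sum_le_sum (fun u hu => hxch w hw u hu)
      simpa [Finset.sum_const, hB₂card, nsmul_eq_mul] using h1
    have hRcard : ((R.card : ℕ):ℝ) ≤ (n:ℝ) := by
      have := Finset.card_le_univ R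
      simp only [Fintype.card_fin] at this
      exact_mod_cast this
    have h1 : (bb:ℝ) * ∑ w ∈ R, s w ^ 2 ≤ ((R.card:ℕ):ℝ) * ∑ u ∈ B₂, s u ^ 2 := by
      rw [Finset.mul_sum]
      calc ∑ w ∈ R, (bb:ℝ) * s w ^ 2 ≤ ∑ _w ∈ R, ∑ u ∈ B₂, s u ^ 2 :=
            Finset.sum_le_sum hper
        _ = ((R.card:ℕ):ℝ) * ∑ u ∈ B₂, s u ^ 2 := by rw [Finset.sum_const, nsmul_eq_mul]
    have h2 : (bb:ℝ) * ∑ w ∈ R, s w ^ 2 ≤ (bb:ℝ) * ((p:ℝ) * ∑ u ∈ B₂, s u ^ 2) := by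
      calc (bb:ℝ) * ∑ w ∈ R, s w ^ 2 ≤ ((R.card:ℕ):ℝ) * ∑ u ∈ B₂, s u ^ 2 := h1
        _ ≤ ((p:ℝ) * (bb:ℝ)) * ∑ u ∈ B₂, s u ^ 2 :=
            mul_le_mul_of_nonneg_right (le_trans hRcard hbP) hB₂nn
        _ = (bb:ℝ) * ((p:ℝ) * ∑ u ∈ B₂, s u ^ 2) := by ring
    exact le_of_mul_le_mul_left h2 hbposR
  -- the subgraph
  set B := B₁ ∪ B₂ with hB
  have hBcard : B.card = bb + bb := by
    rw [hB, Finset.card_union_of_disjoint hdisj, hB₂card]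
  have hmpos : 0 < B.card := by omega
  set f : Fin B.card → Fin n := fun i => (B.equivFin.symm i : Fin n) with hf
  have hfinj : Function.Injective f := by
    intro i j hij
    exact B.equivFin.symm.injective (Subtype.ext hij)
  have hfmem : ∀ i, f i ∈ B := fun i => (B.equivFin.symm i).2
  set G₁ := SimpleGraph.comap f G with hG₁
  have htrans : ∀ F : Fin n → ℝ, ∑ i : Fin B.card, F (f i) = ∑ w ∈ B, F w := by
    intro F
    rw [← Finset.sum_coe_sort B F]
    exact Equiv.sum_comp B.equivFin.symm (fun a => F (a : Fin n))
  set z : Fin B.card → ℝ := fun i => if f i ∈ B₁ then x (f i) else 0 with hz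
  have hfilter : B.filter (fun w => w ∈ B₁) = B₁ := by
    ext a
    simp only [Finset.mem_filter, hB, Finset.mem_union]
    tauto
  have hz2 : ∑ j, z j ^ 2 = W := by
    have h1 : ∀ i : Fin B.card, z i ^ 2 = if f i ∈ B₁ then x (f i) ^ 2 else 0 := by
      intro i; rw [hz]; simp only []; split <;> simp
    have hh : ∑ i : Fin B.card, (if f i ∈ B₁ then x (f i) ^ 2 else 0)
        = ∑ w ∈ B, (if w ∈ B₁ then x w ^ 2 else 0) :=
      htrans (fun w => if w ∈ B₁ then x w ^ 2 else 0)
    rw [Finset.sum_congr rfl (fun i _ => h1 i), hh, ← Finset.sum_filter, hfilter, hW]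
  have hAz : ∀ j, (adjMat G₁).mulVec z j = s (f j) := by
    intro j
    have h1 : (adjMat G₁).mulVec z j
        = ∑ i, (if G.Adj (f j) (f i) then (1:ℝ) else 0) * z i := by
      simp [Matrix.mulVec, dotProduct, adjMat, SimpleGraph.adjMatrix_apply, hG₁,
        SimpleGraph.comap_adj]
    rw [h1]
    have h2 : ∀ i, (if G.Adj (f j) (f i) then (1:ℝ) else 0) * z i
        = (fun w => if w ∈ B₁ then (if G.Adj (f j) w then (1:ℝ) else 0) * x w else 0) (f i) := by
      intro i
      rw [hz]
      simp only []
      by_cases hmem : f i ∈ B₁ <;> simp [hmem]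
    have hh : ∑ i : Fin B.card,
        (if f i ∈ B₁ then (if G.Adj (f j) (f i) then (1:ℝ) else 0) * x (f i) else 0)
        = ∑ w ∈ B, (if w ∈ B₁ then (if G.Adj (f j) w then (1:ℝ) else 0) * x w else 0) :=
      htrans (fun w => if w ∈ B₁ then (if G.Adj (f j) w then (1:ℝ) else 0) * x w else 0)
    rw [Finset.sum_congr rfl (fun i _ => h2 i), hh, ← Finset.sum_filter, hfilter, hs]
    refine Finset.sum_congr rfl fun u _ => ?_
    simp [adjMat, SimpleGraph.adjMatrix_apply]
  have hC : ∑ j, ((adjMat G₁).mulVec z j)^2 = ∑ w ∈ B, s w ^ 2 := by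
    have hh : ∑ i : Fin B.card, s (f i) ^ 2 = ∑ w ∈ B, s w ^ 2 := htrans (fun w => s w ^ 2)
    rw [Finset.sum_congr rfl (fun j _ => by rw [hAz j]), hh]
  obtain ⟨hμ₁nn, hkeyineq⟩ := specKey hmpos G₁ z
  have hC' : ∑ w ∈ B, s w ^ 2 ≤ (specRad G₁)^2 * W := by
    rw [← hC, ← hz2]; exact hkeyineq
  -- combine
  set lam := specRad G with hlam
  set μ₁ := specRad G₁ with hμ₁
  have hB₂B : ∑ u ∈ B₂, s u ^ 2 ≤ ∑ w ∈ B, s w ^ 2 :=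
    Finset.sum_le_sum_of_subset_of_nonneg (subset_union_right) (fun i _ _ => sq_nonneg _)
  have hall : lam^2 * W^2 ≤ (1 + (p:ℝ)) * ((specRad G₁)^2 * W) := by
    have h1 : (lam * W)^2 ≤ (∑ w ∈ B, s w ^ 2) + (p:ℝ) * ∑ u ∈ B₂, s u ^ 2 := by
      rw [hsplit] at hT
      have := hT
      linarith [hRb]
    have h2 : (∑ w ∈ B, s w ^ 2) + (p:ℝ) * ∑ u ∈ B₂, s u ^ 2
        ≤ (1 + (p:ℝ)) * ∑ w ∈ B, s w ^ 2 := by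
      have := mul_le_mul_of_nonneg_left hB₂B (le_of_lt hppos)
      linarith
    have h3 : (1 + (p:ℝ)) * ∑ w ∈ B, s w ^ 2 ≤ (1 + (p:ℝ)) * ((specRad G₁)^2 * W) :=
      mul_le_mul_of_nonneg_left hC' (by linarith)
    calc lam^2 * W^2 = (lam*W)^2 := by ring
      _ ≤ _ := le_trans (le_trans h1 h2) h3
  have hlamW : lam^2 * W ≤ (1 + (p:ℝ)) * μ₁^2 := by
    have h4 : lam^2 * W * W ≤ ((1 + (p:ℝ)) * μ₁^2) * W := by
      calc lam^2 * W * W = lam^2 * W^2 := by ring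
        _ ≤ (1 + (p:ℝ)) * (μ₁^2 * W) := hall
        _ = ((1 + (p:ℝ)) * μ₁^2) * W := by ring
    exact le_of_mul_le_mul_right h4 hWpos
  have h36P : (36:ℝ)/(p:ℝ) ≤ 1 := by rw [div_le_one hppos]; linarith
  have hb36 : 1 + (p:ℝ) ≤ 36*(p:ℝ)*(1/2 - 1/(p:ℝ)^2) := by
    have hexpand : 36*(p:ℝ)*(1/2 - 1/(p:ℝ)^2) = 18*(p:ℝ) - 36/(p:ℝ) := by
      field_simp; ring
    rw [hexpand]
    linarith
  have hlamsq : lam^2 ≤ 36*(p:ℝ)*μ₁^2 := by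
    have h5 : lam^2 * (1/2 - 1/(p:ℝ)^2) ≤ lam^2 * W := by
      refine mul_le_mul_of_nonneg_left ?_ (sq_nonneg _)
      rw [hW]
      exact le_of_lt hB₁w
    have h6 : (1 + (p:ℝ)) * μ₁^2 ≤ 36*(p:ℝ)*(1/2 - 1/(p:ℝ)^2) * μ₁^2 :=
      mul_le_mul_of_nonneg_right hb36 (sq_nonneg _)
    have h7 : lam^2 * (1/2 - 1/(p:ℝ)^2) ≤ 36*(p:ℝ)*(1/2 - 1/(p:ℝ)^2) * μ₁^2 :=
      le_trans (le_trans h5 hlamW) h6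
    have hfrac : (0:ℝ) < 1/2 - 1/(p:ℝ)^2 := by linarith
    have h8 : lam^2 * (1/2 - 1/(p:ℝ)^2) ≤ (36*(p:ℝ)*μ₁^2) * (1/2 - 1/(p:ℝ)^2) := by
      calc lam^2 * (1/2 - 1/(p:ℝ)^2) ≤ 36*(p:ℝ)*(1/2 - 1/(p:ℝ)^2) * μ₁^2 := h7
        _ = (36*(p:ℝ)*μ₁^2) * (1/2 - 1/(p:ℝ)^2) := by ring
    exact le_of_mul_le_mul_right h8 hfrac
  have hsqrtP : (0:ℝ) < Real.sqrt (p:ℝ) := Real.sqrt_pos.mpr hppos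
  have hgoal1 : lam/(6*Real.sqrt (p:ℝ)) ≤ μ₁ := by
    have h6sq : (6*Real.sqrt (p:ℝ))^2 = 36*(p:ℝ) := by
      rw [mul_pow, Real.sq_sqrt (le_of_lt hppos)]; norm_num
    have hsqle : (lam/(6*Real.sqrt (p:ℝ)))^2 ≤ μ₁^2 := by
      rw [div_pow, h6sq, div_le_iff₀ (by positivity)]
      linarith [hlamsq]
    have hlhsnn : 0 ≤ lam/(6*Real.sqrt (p:ℝ)) := div_nonneg (le_of_lt hLampos) (by positivity)
    calc lam/(6*Real.sqrt (p:ℝ)) = Real.sqrt ((lam/(6*Real.sqrt (p:ℝ)))^2) :=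
          (Real.sqrt_sq hlhsnn).symm
      _ ≤ Real.sqrt (μ₁^2) := Real.sqrt_le_sqrt hsqle
      _ = μ₁ := Real.sqrt_sq hμ₁nn
  -- m bounds
  have hmeq : ((B.card : ℕ):ℝ) = (bb:ℝ) + (bb:ℝ) := by exact_mod_cast congrArg (Nat.cast (R := ℝ)) hBcard
  have hmlow : (n:ℝ)/(p:ℝ) ≤ ((B.card : ℕ):ℝ) := by rw [hmeq]; linarith
  have hnP2 : (2:ℝ) ≤ (n:ℝ)/(p:ℝ) := by
    rw [le_div_iff₀ hppos]; linarith
  have hmup : ((B.card : ℕ):ℝ) ≤ 3 * (n:ℝ) / (p:ℝ) := by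
    rw [hmeq]
    have : 3 * (n:ℝ) / (p:ℝ) = (n:ℝ)/(p:ℝ) + (n:ℝ)/(p:ℝ) + (n:ℝ)/(p:ℝ) := by ring
    rw [this]
    linarith
  -- rpow bound
  have hexpnn : (0:ℝ) ≤ (1:ℝ)/2 + ε := by linarith
  have hmono : ((B.card : ℕ):ℝ)^((1:ℝ)/2 + ε) ≤ (3*(n:ℝ)/(p:ℝ))^((1:ℝ)/2 + ε) :=
    Real.rpow_le_rpow (by positivity) hmup hexpnn
  have hPε : (18:ℝ) ≤ (p:ℝ)^ε := by
    have h0 : (0:ℝ) ≤ (18:ℝ)^((2-2*ε)/ε) := by positivity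
    have h1 : ((18:ℝ)^((2-2*ε)/ε))^ε ≤ (p:ℝ)^ε :=
      Real.rpow_le_rpow h0 hPle (le_of_lt hε0)
    have h2 : ((18:ℝ)^((2-2*ε)/ε))^ε = (18:ℝ)^(2-2*ε) := by
      rw [← Real.rpow_mul (by norm_num : (0:ℝ) ≤ 18), div_mul_cancel₀ _ (ne_of_gt hε0)]
    have h3 : (18:ℝ)^(1:ℝ) ≤ (18:ℝ)^(2-2*ε) :=
      Real.rpow_le_rpow_of_exponent_le (by norm_num) (by linarith)
    rw [Real.rpow_one] at h3
    rw [h2] at h1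
    linarith
  have h3e : (3:ℝ)^((1:ℝ)/2 + ε) ≤ 3 := by
    have := Real.rpow_le_rpow_of_exponent_le (by norm_num : (1:ℝ) ≤ 3)
      (show (1:ℝ)/2 + ε ≤ 1 by linarith)
    rwa [Real.rpow_one] at this
  have h3nn : (0:ℝ) ≤ (3:ℝ)^((1:ℝ)/2 + ε) := by positivity
  have hkey2 : (3/(p:ℝ))^((1:ℝ)/2 + ε) * (6*Real.sqrt (p:ℝ)) ≤ 1 := by
    have hdiv : (3/(p:ℝ))^((1:ℝ)/2+ε) = (3:ℝ)^((1:ℝ)/2+ε) / (p:ℝ)^((1:ℝ)/2+ε) :=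
      Real.div_rpow (by norm_num) (le_of_lt hppos) _
    have hPa : (p:ℝ)^((1:ℝ)/2+ε) = (p:ℝ)^((1:ℝ)/2) * (p:ℝ)^ε := Real.rpow_add hppos _ _
    have hsqeq : Real.sqrt (p:ℝ) = (p:ℝ)^((1:ℝ)/2) := Real.sqrt_eq_rpow (p:ℝ)
    have hhalfpos : (0:ℝ) < (p:ℝ)^((1:ℝ)/2) := Real.rpow_pos_of_pos hppos _
    have hεpos : (0:ℝ) < (p:ℝ)^ε := Real.rpow_pos_of_pos hppos _
    have heq : (3/(p:ℝ))^((1:ℝ)/2+ε) * (6*Real.sqrt (p:ℝ))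
        = 6 * (3:ℝ)^((1:ℝ)/2+ε) / (p:ℝ)^ε := by
      rw [hdiv, hPa, hsqeq]
      field_simp
    rw [heq, div_le_one hεpos]
    linarith
  -- final assembly
  refine ⟨B.card, G₁, ⟨⟨f, hfinj⟩, fun u v h => h⟩, hmlow, hmup, hgoal1, ?_⟩
  have hrpnn : (0:ℝ) ≤ (3/(p:ℝ))^((1:ℝ)/2+ε) := by positivity
  have hbase : 3*(n:ℝ)/(p:ℝ) = (3/(p:ℝ)) * (n:ℝ) := by ring
  have hmulr : (3*(n:ℝ)/(p:ℝ))^((1:ℝ)/2+ε)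
      = (3/(p:ℝ))^((1:ℝ)/2+ε) * (n:ℝ)^((1:ℝ)/2+ε) := by
    rw [hbase, Real.mul_rpow (by positivity) (le_of_lt hnpos)]
  have hstep : (3/(p:ℝ))^((1:ℝ)/2+ε) ≤ 1/(6*Real.sqrt (p:ℝ)) := by
    rw [le_div_iff₀ (by positivity)]
    exact hkey2
  calc c * ((B.card : ℕ):ℝ)^((1:ℝ)/2+ε) ≤ c * (3*(n:ℝ)/(p:ℝ))^((1:ℝ)/2+ε) :=
        mul_le_mul_of_nonneg_left hmono (le_of_lt hc)
    _ = (c * (n:ℝ)^((1:ℝ)/2+ε)) * (3/(p:ℝ))^((1:ℝ)/2+ε) := by rw [hmulr]; ring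
    _ ≤ lam * (3/(p:ℝ))^((1:ℝ)/2+ε) := mul_le_mul_of_nonneg_right hLam hrpnn
    _ ≤ lam * (1/(6*Real.sqrt (p:ℝ))) :=
        mul_le_mul_of_nonneg_left hstep (le_of_lt hLampos)
    _ = lam/(6*Real.sqrt (p:ℝ)) := by ring
    _ ≤ μ₁ := hgoal1
end
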